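/- arXiv:1707.05662 — 7 statements merged into one kernel-verified Lean document; each statement's English description precedes it below -/
import Mathlib

section
/- Let X and Y be Poisson Binomial Distributions (sums of independent Bernoulli random variables) with means μ_X, μ_Y and variances σ_X², σ_Y². For any ε > 0 such that σ_X², σ_Y² ≥ ln(2/(1-ε)), if |μ_Y - μ_X| > 2√(ln(2/(1-ε)))·(σ_X + σ_Y), then the total variation distance between X and Y is greater than ε. -/
open Finset

lemma exp_le_quad_of_nonpos {y : ℝ} (hy : y ≤ 0) : Real.exp y ≤ 1 + y + y^2/2 := by
  have ht0 : 0 ≤ -y := by linarith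
  have h4 : ∑ i ∈ range 4, (-y) ^ i / (i.factorial : ℝ) ≤ Real.exp (-y) :=
    Real.sum_le_exp_of_nonneg ht0 4
  have hsum : ∑ i ∈ range 4, (-y) ^ i / (i.factorial : ℝ) = 1 - y + y^2/2 - y^3/6 := by
    norm_num [Finset.sum_range_succ, Nat.factorial]; ring
  rw [hsum] at h4
  have hpos : (0:ℝ) < 1 + y + y^2/2 := by nlinarith [sq_nonneg (y+1)]
  have key : 1 ≤ (1 + y + y^2/2) * Real.exp (-y) := by
    have hm := mul_le_mul_of_nonneg_left h4 hpos.le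
    nlinarith [hm, pow_nonneg ht0 3, pow_nonneg ht0 4, pow_nonneg ht0 5]
  rw [Real.exp_neg] at key
  have h5 := mul_le_mul_of_nonneg_right key (Real.exp_pos y).le
  rw [one_mul, mul_assoc, inv_mul_cancel₀ (Real.exp_pos y).ne', mul_one] at h5
  exact h5

lemma half_sq_le_g {s : ℝ} (hs : 0 ≤ s) : s^2/2 ≤ Real.exp s - 1 - s := by
  have h := Real.sum_le_exp_of_nonneg hs 3
  have hsum : ∑ i ∈ range 3, s ^ i / (i.factorial : ℝ) = 1 + s + s^2/2 := by
    norm_num [Finset.sum_range_succ, Nat.factorial]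
  rw [hsum] at h; linarith

lemma g_le_three_quarter {s : ℝ} (h0 : 0 ≤ s) (h1 : s ≤ 1) :
    Real.exp s - 1 - s ≤ (3/4) * s^2 := by
  have hb := Real.exp_bound (x := s) (by rw [abs_of_nonneg h0]; exact h1) (n := 2) (by norm_num)
  have hsum : ∑ m ∈ range 2, s ^ m / (m.factorial : ℝ) = 1 + s := by
    norm_num [Finset.sum_range_succ, Nat.factorial]
  rw [hsum, abs_of_nonneg h0] at hb
  have h2 := (abs_le.1 hb).2
  norm_num [Nat.factorial] at h2; nlinarith


lemma real_exp_tsum (t : ℝ) : Real.exp t = ∑' k : ℕ, t^k / (k.factorial : ℝ) := by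
  rw [Real.exp_eq_exp_ℝ, NormedSpace.exp_eq_tsum_div]

lemma exp_mul_le {s x : ℝ} (hs : 0 ≤ s) (hx0 : 0 ≤ x) (hx1 : x ≤ 1) :
    Real.exp (s*x) ≤ 1 + s*x + x^2*(Real.exp s - 1 - s) := by
  have hsum1 : Summable (fun k : ℕ => (s*x)^k / (k.factorial : ℝ)) :=
    Real.summable_pow_div_factorial _
  have hsum2 : Summable (fun k : ℕ => s^k / (k.factorial : ℝ)) :=
    Real.summable_pow_div_factorial _
  have e1 : Real.exp (s*x) = (1 + s*x) + ∑' k : ℕ, (s*x)^(k+2) / ((k+2).factorial : ℝ) := by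
    rw [real_exp_tsum (s*x), ← Summable.sum_add_tsum_nat_add 2 hsum1]
    norm_num [Finset.sum_range_succ, Nat.factorial]
  have e2 : Real.exp s = (1 + s) + ∑' k : ℕ, s^(k+2) / ((k+2).factorial : ℝ) := by
    rw [real_exp_tsum s, ← Summable.sum_add_tsum_nat_add 2 hsum2]
    norm_num [Finset.sum_range_succ, Nat.factorial]
  have hterm : ∀ k : ℕ, (s*x)^(k+2) / ((k+2).factorial : ℝ)
      ≤ x^2 * (s^(k+2) / ((k+2).factorial : ℝ)) := by
    intro k
    rw [mul_pow]
    rw [div_le_iff₀ (by positivity : (0:ℝ) < ((k+2).factorial : ℝ))]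
    have hxp : x^(k+2) ≤ x^2 := pow_le_pow_of_le_one hx0 hx1 (by omega)
    have hsp : (0:ℝ) ≤ s^(k+2) := pow_nonneg hs _
    calc s^(k+2) * x^(k+2) ≤ s^(k+2) * x^2 := by nlinarith
      _ = x^2 * (s^(k+2)/((k+2).factorial:ℝ)) * ((k+2).factorial:ℝ) := by
          field_simp
  have hle : ∑' k : ℕ, (s*x)^(k+2) / ((k+2).factorial : ℝ)
      ≤ ∑' k : ℕ, x^2 * (s^(k+2) / ((k+2).factorial : ℝ)) := by
    refine Summable.tsum_le_tsum hterm ?_ ?_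
    · exact (summable_nat_add_iff 2).2 hsum1
    · exact ((summable_nat_add_iff 2).2 hsum2).mul_left _
  rw [tsum_mul_left] at hle
  have e3 : ∑' k : ℕ, s^(k+2) / ((k+2).factorial : ℝ) = Real.exp s - 1 - s := by
    rw [e2]; ring
  rw [e3] at hle
  linarith [e1, hle]



lemma factor_le {p s : ℝ} (hp0 : 0 ≤ p) (hp1 : p ≤ 1) (hs : 0 ≤ s) :
    1 - p + p * Real.exp s ≤ Real.exp (s*p + p*(1-p)*(Real.exp s - 1 - s)) := by
  set g := Real.exp s - 1 - s with hg
  have hg0 : 0 ≤ g := by have := half_sq_le_g hs; nlinarith [sq_nonneg s]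
  have A : Real.exp (s*(1-p)) ≤ 1 + s*(1-p) + (1-p)^2*g :=
    exp_mul_le hs (by linarith) (by linarith)
  have B : Real.exp (-(s*p)) ≤ 1 - s*p + p^2*g := by
    have h1 := exp_le_quad_of_nonpos (y := -(s*p)) (by nlinarith)
    have h2 := half_sq_le_g hs
    nlinarith [sq_nonneg p, sq_nonneg (s*p), mul_le_mul_of_nonneg_left h2 (sq_nonneg p)]
  have key : Real.exp (-(s*p)) * (1 - p + p * Real.exp s) ≤ 1 + p*(1-p)*g := by
    have e1 : Real.exp (-(s*p)) * Real.exp s = Real.exp (s*(1-p)) := by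
      rw [← Real.exp_add]; ring_nf
    calc Real.exp (-(s*p)) * (1 - p + p * Real.exp s)
        = (1-p) * Real.exp (-(s*p)) + p * (Real.exp (-(s*p)) * Real.exp s) := by ring
      _ = (1-p) * Real.exp (-(s*p)) + p * Real.exp (s*(1-p)) := by rw [e1]
      _ ≤ (1-p) * (1 - s*p + p^2*g) + p * (1 + s*(1-p) + (1-p)^2*g) := by
          have hB := mul_le_mul_of_nonneg_left B (by linarith : (0:ℝ) ≤ 1-p)
          have hA := mul_le_mul_of_nonneg_left A hp0
          linarith
      _ = 1 + p*(1-p)*g := by ring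
  have h3 : (1 : ℝ) + p*(1-p)*g ≤ Real.exp (p*(1-p)*g) := by
    have := Real.add_one_le_exp (p*(1-p)*g); linarith
  have h4 := mul_le_mul_of_nonneg_left (key.trans h3) (Real.exp_pos (s*p)).le
  rw [← Real.exp_add] at h4
  have e2 : Real.exp (s*p) * (Real.exp (-(s*p)) * (1 - p + p*Real.exp s))
      = 1 - p + p * Real.exp s := by
    rw [← mul_assoc, ← Real.exp_add]; simp
  rw [e2] at h4
  convert h4 using 2

lemma factor_neg_le {p s : ℝ} (hp0 : 0 ≤ p) (hp1 : p ≤ 1) (hs : 0 ≤ s) :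
    1 - p + p * Real.exp (-s) ≤ Real.exp (-(s*p) + p*(1-p)*(Real.exp s - 1 - s)) := by
  have h := factor_le (p := 1-p) (by linarith) (by linarith) hs
  have h2 := mul_le_mul_of_nonneg_left h (Real.exp_pos (-s)).le
  rw [← Real.exp_add] at h2
  have e1 : Real.exp (-s) * (1 - (1-p) + (1-p) * Real.exp s)
      = p * Real.exp (-s) + (1-p) := by
    have : Real.exp (-s) * Real.exp s = 1 := by rw [← Real.exp_add]; simp
    nlinarith [this]
  rw [e1] at h2
  calc 1 - p + p * Real.exp (-s) = p * Real.exp (-s) + (1-p) := by ring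
    _ ≤ Real.exp (-s + (s*(1-p) + (1-p)*(1-(1-p))*(Real.exp s - 1 - s))) := h2
    _ = Real.exp (-(s*p) + p*(1-p)*(Real.exp s - 1 - s)) := by congr 1; ring


/-- Mass function of the Poisson Binomial Distribution with the given list of
    Bernoulli parameters: the distribution of the sum of independent Bernoulli
    random variables with these expectations (defined by convolution). -/
noncomputable def pbd : List ℝ → ℕ → ℝ
  | [], k => if k = 0 then 1 else 0
  | p :: ps, k => (1 - p) * pbd ps k + p * (if k = 0 then 0 else pbd ps (k - 1))

/-- Mean of a distribution on `ℕ` given by its mass function. -/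
noncomputable def pmfMean (f : ℕ → ℝ) : ℝ := ∑' k : ℕ, (k : ℝ) * f k

/-- Variance of a distribution on `ℕ` given by its mass function. -/
noncomputable def pmfVar (f : ℕ → ℝ) : ℝ := ∑' k : ℕ, ((k : ℝ) - pmfMean f) ^ 2 * f k

/-- Total variation distance of two distributions on `ℕ` given by their mass
    functions. -/
noncomputable def tvDist (f g : ℕ → ℝ) : ℝ := (1 / 2) * ∑' k, |f k - g k|


namespace PbdAux

def IsP (ps : List ℝ) : Prop := ∀ p ∈ ps, p ∈ Set.Icc (0 : ℝ) 1

noncomputable def listVar (ps : List ℝ) : ℝ := (ps.map (fun p => p * (1 - p))).sum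

lemma listVar_cons (p) (ps) : listVar (p :: ps) = p * (1-p) + listVar ps := by
  simp [listVar]

lemma listVar_nonneg {ps : List ℝ} (h : IsP ps) : 0 ≤ listVar ps := by
  induction ps with
  | nil => simp [listVar]
  | cons p ps ih =>
    have hp := h p (by simp)
    have : IsP ps := fun q hq => h q (by simp [hq])
    have := ih this
    rw [listVar_cons]
    nlinarith [hp.1, hp.2]

lemma pbd_nonneg {ps : List ℝ} (h : IsP ps) (k : ℕ) : 0 ≤ pbd ps k := by
  induction ps generalizing k with
  | nil => simp only [pbd]; split <;> norm_num
  | cons p ps ih =>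
    have hp := h p (by simp)
    have hps : IsP ps := fun q hq => h q (by simp [hq])
    simp only [pbd]
    have h1 := ih hps k
    have h2 : (0:ℝ) ≤ (if k = 0 then 0 else pbd ps (k-1)) := by
      split
      · exact le_refl 0
      · exact ih hps (k-1)
    nlinarith [hp.1, hp.2]

lemma pbd_eq_zero {ps : List ℝ} {k : ℕ} (h : ps.length < k) : pbd ps k = 0 := by
  induction ps generalizing k with
  | nil =>
    simp only [pbd]
    rw [if_neg (by simp at h; omega)]
  | cons p ps ih =>
    simp only [pbd]
    have hk : k ≠ 0 := by simp at h; omega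
    rw [if_neg hk]
    rw [ih (by simp at h ⊢; omega), ih (by simp at h ⊢; omega)]
    ring

noncomputable def S (ps : List ℝ) (g : ℕ → ℝ) : ℝ :=
  ∑ k ∈ Finset.range (ps.length + 1), g k * pbd ps k

lemma S_cons (p : ℝ) (ps : List ℝ) (g : ℕ → ℝ) :
    S (p :: ps) g = (1 - p) * S ps g + p * S ps (fun k => g (k + 1)) := by
  have hlen : (p :: ps).length + 1 = (ps.length + 1) + 1 := by simp
  simp only [S, hlen]
  have expand : ∀ k, g k * pbd (p :: ps) k
      = (1 - p) * (g k * pbd ps k) + p * (g k * (if k = 0 then 0 else pbd ps (k - 1))) := by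
    intro k; simp only [pbd]; ring
  have h1 : ∑ k ∈ range (ps.length + 1 + 1), g k * pbd ps k = S ps g := by
    rw [S, Finset.sum_range_succ, pbd_eq_zero (by simp), mul_zero, add_zero]
  have h2 : ∑ k ∈ range (ps.length + 1 + 1), g k * (if k = 0 then 0 else pbd ps (k - 1))
      = S ps (fun k => g (k + 1)) := by
    rw [Finset.sum_range_succ' (fun k => g k * (if k = 0 then 0 else pbd ps (k - 1)))]
    simp [S]
  rw [Finset.sum_congr rfl (fun k _ => expand k), Finset.sum_add_distrib,
    ← Finset.mul_sum, ← Finset.mul_sum, h1, h2]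
  simp only [S]

lemma S_congr {ps : List ℝ} {g h : ℕ → ℝ} (He : ∀ k, g k = h k) : S ps g = S ps h := by
  simp only [S]; exact Finset.sum_congr rfl (fun k _ => by rw [He])

lemma S_one {ps : List ℝ} : S ps (fun _ => 1) = 1 := by
  induction ps with
  | nil => simp [S, pbd]
  | cons p ps ih => rw [S_cons, ih]; ring

lemma S_mean {ps : List ℝ} : S ps (fun k => (k : ℝ)) = ps.sum := by
  induction ps with
  | nil => simp [S, pbd]
  | cons p ps ih =>
    rw [S_cons]
    have : S ps (fun k => ((k+1 : ℕ) : ℝ)) = S ps (fun k => (k:ℝ) + 1) := by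
      apply S_congr; intro k; push_cast; ring
    rw [this]
    have hadd : S ps (fun k => (k:ℝ) + 1) = S ps (fun k => (k:ℝ)) + S ps (fun _ => 1) := by
      simp only [S, ← Finset.sum_add_distrib]
      apply Finset.sum_congr rfl; intros; ring
    rw [hadd, ih, S_one]
    simp; ring


lemma S_nonneg {ps : List ℝ} (h : IsP ps) {g : ℕ → ℝ} (hg : ∀ k, 0 ≤ g k) :
    0 ≤ S ps g :=
  Finset.sum_nonneg (fun k _ => mul_nonneg (hg k) (pbd_nonneg h k))

lemma S_exp_le {ps : List ℝ} (h : IsP ps) {s : ℝ} (hs : 0 ≤ s) :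
    S ps (fun k => Real.exp (s*k)) ≤
      Real.exp (s * ps.sum + listVar ps * (Real.exp s - 1 - s)) := by
  induction ps with
  | nil => simp [S, pbd, listVar]
  | cons p ps ih =>
    have hp := h p (by simp)
    have hps : IsP ps := fun q hq => h q (by simp [hq])
    rw [S_cons]
    have e1 : S ps (fun k => Real.exp (s*((k:ℕ)+1:ℕ))) = Real.exp s * S ps (fun k => Real.exp (s*k)) := by
      rw [show (fun k : ℕ => Real.exp (s*((k:ℕ)+1:ℕ))) = (fun k : ℕ => Real.exp s * Real.exp (s*k)) by
        funext k; rw [← Real.exp_add]; congr 1; push_cast; ring]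
      simp only [S, Finset.mul_sum, mul_assoc]
    rw [e1, ← mul_assoc, ← add_mul]
    have hM0 : 0 ≤ S ps (fun k => Real.exp (s*k)) :=
      S_nonneg hps (fun k => (Real.exp_pos _).le)
    have hf : (0:ℝ) ≤ 1 - p + p * Real.exp s := by
      nlinarith [Real.exp_pos s, Real.add_one_le_exp s, hp.1, hp.2]
    calc (1 - p + p * Real.exp s) * S ps (fun k => Real.exp (s*k))
        ≤ (1 - p + p * Real.exp s) * Real.exp (s * ps.sum + listVar ps * (Real.exp s - 1 - s)) :=
          mul_le_mul_of_nonneg_left (ih hps) hf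
      _ ≤ Real.exp (s*p + p*(1-p)*(Real.exp s - 1 - s)) *
            Real.exp (s * ps.sum + listVar ps * (Real.exp s - 1 - s)) :=
          mul_le_mul_of_nonneg_right (factor_le hp.1 hp.2 hs) (Real.exp_pos _).le
      _ = Real.exp (s * (p :: ps).sum + listVar (p :: ps) * (Real.exp s - 1 - s)) := by
          rw [← Real.exp_add, listVar_cons, List.sum_cons]; congr 1; ring

lemma S_exp_neg_le {ps : List ℝ} (h : IsP ps) {s : ℝ} (hs : 0 ≤ s) :
    S ps (fun k => Real.exp (-(s*k))) ≤
      Real.exp (-(s * ps.sum) + listVar ps * (Real.exp s - 1 - s)) := by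
  induction ps with
  | nil => simp [S, pbd, listVar]
  | cons p ps ih =>
    have hp := h p (by simp)
    have hps : IsP ps := fun q hq => h q (by simp [hq])
    rw [S_cons]
    have e1 : S ps (fun k => Real.exp (-(s*((k:ℕ)+1:ℕ)))) =
        Real.exp (-s) * S ps (fun k => Real.exp (-(s*k))) := by
      rw [show (fun k : ℕ => Real.exp (-(s*((k:ℕ)+1:ℕ)))) = (fun k : ℕ => Real.exp (-s) * Real.exp (-(s*k))) by
        funext k; rw [← Real.exp_add]; congr 1; push_cast; ring]
      simp only [S, Finset.mul_sum, mul_assoc]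
    rw [e1, ← mul_assoc, ← add_mul]
    have hM0 : 0 ≤ S ps (fun k => Real.exp (-(s*k))) :=
      S_nonneg hps (fun k => (Real.exp_pos _).le)
    have hf : (0:ℝ) ≤ 1 - p + p * Real.exp (-s) := by
      nlinarith [Real.exp_pos (-s), hp.1, hp.2, (Real.exp_le_one_iff.2 (by linarith : -s ≤ 0))]
    calc (1 - p + p * Real.exp (-s)) * S ps (fun k => Real.exp (-(s*k)))
        ≤ (1 - p + p * Real.exp (-s)) * Real.exp (-(s * ps.sum) + listVar ps * (Real.exp s - 1 - s)) :=
          mul_le_mul_of_nonneg_left (ih hps) hf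
      _ ≤ Real.exp (-(s*p) + p*(1-p)*(Real.exp s - 1 - s)) *
            Real.exp (-(s * ps.sum) + listVar ps * (Real.exp s - 1 - s)) :=
          mul_le_mul_of_nonneg_right (factor_neg_le hp.1 hp.2 hs) (Real.exp_pos _).le
      _ = Real.exp (-(s * (p :: ps).sum) + listVar (p :: ps) * (Real.exp s - 1 - s)) := by
          rw [← Real.exp_add, listVar_cons, List.sum_cons]; congr 1; ring


lemma S_poly4 (ps : List ℝ) (c a3 a2 a1 a0 : ℝ) :
    S ps (fun k => ((k:ℝ)-c)^4 + a3*((k:ℝ)-c)^3 + a2*((k:ℝ)-c)^2 + a1*((k:ℝ)-c) + a0)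
      = S ps (fun k => ((k:ℝ)-c)^4) + a3 * S ps (fun k => ((k:ℝ)-c)^3)
        + a2 * S ps (fun k => ((k:ℝ)-c)^2) + a1 * S ps (fun k => (k:ℝ)-c)
        + a0 * S ps (fun _ => 1) := by
  simp only [S, Finset.mul_sum, ← Finset.sum_add_distrib]
  exact Finset.sum_congr rfl (fun k _ => by ring)

lemma S_poly2 (ps : List ℝ) (a1 a0 : ℝ) :
    S ps (fun k => (k:ℝ)^2 + a1*(k:ℝ) + a0)
      = S ps (fun k => (k:ℝ)^2) + a1 * S ps (fun k => (k:ℝ)) + a0 * S ps (fun _ => 1) := by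
  simp only [S, Finset.mul_sum, ← Finset.sum_add_distrib]
  exact Finset.sum_congr rfl (fun k _ => by ring)

lemma S_sq {ps : List ℝ} : S ps (fun k => (k:ℝ)^2) = listVar ps + ps.sum^2 := by
  induction ps with
  | nil => simp [S, pbd, listVar]
  | cons p ps ih =>
    rw [S_cons]
    have e1 : S ps (fun k => ((k+1:ℕ):ℝ)^2)
        = S ps (fun k => (k:ℝ)^2) + 2 * S ps (fun k => (k:ℝ)) + 1 * S ps (fun _ => 1) := by
      rw [← S_poly2 ps 2 1]
      apply S_congr; intro k; push_cast; ring
    rw [e1, ih, S_mean, S_one, listVar_cons, List.sum_cons]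
    ring

lemma S_c1 {ps : List ℝ} (c : ℝ) : S ps (fun k => (k:ℝ) - c) = ps.sum - c := by
  have e : S ps (fun k => (k:ℝ) - c)
      = ∑ k ∈ Finset.range (ps.length + 1), ((k:ℝ) * pbd ps k - c * (1 * pbd ps k)) := by
    simp only [S]
    exact Finset.sum_congr rfl (fun k _ => by ring)
  rw [e, Finset.sum_sub_distrib, ← Finset.mul_sum]
  have h1 : ∑ k ∈ Finset.range (ps.length + 1), (k:ℝ) * pbd ps k = ps.sum := S_mean
  have h2 : ∑ k ∈ Finset.range (ps.length + 1), (1:ℝ) * pbd ps k = 1 := S_one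
  rw [h1, h2]; ring

lemma S_m4_le {ps : List ℝ} (h : IsP ps) :
    S ps (fun k => ((k:ℝ) - ps.sum)^4) ≤ 3*(listVar ps)^2 + listVar ps := by
  induction ps with
  | nil => simp [S, pbd, listVar]
  | cons p ps ih =>
    have hp := h p (by simp)
    have hps : IsP ps := fun q hq => h q (by simp [hq])
    have hV := listVar_nonneg hps
    rw [S_cons, List.sum_cons]
    set μ := ps.sum with hμ
    set V := listVar ps with hV'
    have hc1 : S ps (fun k => (k:ℝ) - μ) = 0 := by rw [S_c1]; simp [hμ]
    have hc2 : S ps (fun k => ((k:ℝ) - μ)^2) = V := by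
      have e : S ps (fun k => ((k:ℝ) - μ)^2)
          = S ps (fun k => (k:ℝ)^2) + (-2*μ) * S ps (fun k => (k:ℝ)) + μ^2 * S ps (fun _ => 1) := by
        rw [← S_poly2 ps (-2*μ) (μ^2)]
        apply S_congr; intro k; ring
      rw [e, S_sq, S_mean, S_one]; ring
    set c3 := S ps (fun k => ((k:ℝ) - μ)^3) with hc3
    have hc4 := ih hps
    have e1 : S ps (fun k => ((k:ℝ) - (p + μ))^4)
        = S ps (fun k => ((k:ℝ)-μ)^4) + (-4*p) * c3 + (6*p^2) * V + 0 + p^4 := by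
      rw [show (fun k:ℕ => ((k:ℝ)-(p+μ))^4)
          = (fun k:ℕ => ((k:ℝ)-μ)^4 + (-4*p)*((k:ℝ)-μ)^3 + (6*p^2)*((k:ℝ)-μ)^2
              + (-4*p^3)*((k:ℝ)-μ) + p^4) from funext fun k => by ring]
      rw [S_poly4, hc1, hc2, S_one]; ring
    have e2 : S ps (fun k => (((k+1:ℕ):ℝ) - (p + μ))^4)
        = S ps (fun k => ((k:ℝ)-μ)^4) + (4*(1-p)) * c3 + (6*(1-p)^2) * V + 0 + (1-p)^4 := by
      rw [show (fun k:ℕ => (((k+1:ℕ):ℝ)-(p+μ))^4)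
          = (fun k:ℕ => ((k:ℝ)-μ)^4 + (4*(1-p))*((k:ℝ)-μ)^3 + (6*(1-p)^2)*((k:ℝ)-μ)^2
              + (4*(1-p)^3)*((k:ℝ)-μ) + (1-p)^4) from funext fun k => by push_cast; ring]
      rw [S_poly4, hc1, hc2, S_one]; ring
    rw [e1, e2, listVar_cons]
    nlinarith [hp.1, hp.2, hc4, hV, sq_nonneg (p*(1-p)), mul_nonneg (mul_nonneg hp.1 (by linarith [hp.2] : (0:ℝ) ≤ 1-p)) hV]


lemma sum_pbd_ext {ps : List ℝ} {N : ℕ} (hN : ps.length < N) (g : ℕ → ℝ) :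
    ∑ k ∈ Finset.range N, g k * pbd ps k = S ps g := by
  rw [S]
  refine (Finset.sum_subset (Finset.range_subset_range.2 (by omega)) ?_).symm
  intro k _ hk
  rw [pbd_eq_zero (by simp at hk ⊢; omega), mul_zero]

lemma S_div (ps : List ℝ) (g : ℕ → ℝ) (d : ℝ) :
    S ps (fun k => g k / d) = S ps g / d := by
  simp only [S, Finset.sum_div]
  exact Finset.sum_congr rfl (fun k _ => by ring)

lemma S_c2' {ps : List ℝ} : S ps (fun k => ((k:ℝ) - ps.sum)^2) = listVar ps := by
  have e : S ps (fun k => ((k:ℝ) - ps.sum)^2)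
      = S ps (fun k => (k:ℝ)^2) + (-2*ps.sum) * S ps (fun k => (k:ℝ))
        + (ps.sum^2) * S ps (fun _ => 1) := by
    rw [← S_poly2 ps (-2*ps.sum) (ps.sum^2)]
    apply S_congr; intro k; ring
  rw [e, S_sq, S_mean, S_one]; ring

lemma tail_le_weight {ps : List ℝ} (h : IsP ps) {N : ℕ} (hN : ps.length < N)
    (C : ℕ → Prop) [DecidablePred C] (w : ℕ → ℝ)
    (hw1 : ∀ k, C k → 1 ≤ w k) (hw0 : ∀ k, 0 ≤ w k) :
    ∑ k ∈ (Finset.range N).filter (fun k => C k), pbd ps k ≤ S ps w := by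
  calc ∑ k ∈ (Finset.range N).filter (fun k => C k), pbd ps k
      ≤ ∑ k ∈ (Finset.range N).filter (fun k => C k), w k * pbd ps k := by
        refine Finset.sum_le_sum (fun k hk => ?_)
        have hC := (Finset.mem_filter.1 hk).2
        nlinarith [pbd_nonneg h k, hw1 k hC]
    _ ≤ ∑ k ∈ Finset.range N, w k * pbd ps k := by
        refine Finset.sum_le_sum_of_subset_of_nonneg (Finset.filter_subset _ _) ?_
        intro k _ _
        exact mul_nonneg (hw0 k) (pbd_nonneg h k)
    _ = S ps w := sum_pbd_ext hN w

set_option maxHeartbeats 2000000 in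
lemma tail_master {ps : List ℝ} (h : IsP ps) {L : ℝ} (hL2 : Real.log 2 < L)
    (hLV : L ≤ listVar ps) {N : ℕ} (hN : ps.length < N) :
    ∑ k ∈ (Finset.range N).filter
        (fun k : ℕ => 2 * Real.sqrt L * Real.sqrt (listVar ps) < |(k:ℝ) - ps.sum|), pbd ps k
      < Real.exp (-L) := by
  have hlog2 : (0.6931471803 : ℝ) < Real.log 2 := Real.log_two_gt_d9
  have hL0 : (0:ℝ) < L := by linarith
  set V := listVar ps with hVdef
  set μ := ps.sum with hμdef
  have hV0 : (0:ℝ) < V := by linarith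
  set r := 2 * Real.sqrt L * Real.sqrt V with hrdef
  have hsL : Real.sqrt L ^ 2 = L := Real.sq_sqrt hL0.le
  have hsV : Real.sqrt V ^ 2 = V := Real.sq_sqrt hV0.le
  have hsL0 : 0 < Real.sqrt L := Real.sqrt_pos.2 hL0
  have hsV0 : 0 < Real.sqrt V := Real.sqrt_pos.2 hV0
  have hr2 : r^2 = 4 * L * V := by rw [hrdef, mul_pow, mul_pow, hsL, hsV]; ring
  have hr0 : 0 < r := by positivity
  have hexpe : Real.exp 1 < 2.7182818286 := Real.exp_one_lt_d9
  rcases le_or_gt L 1 with hL1 | hL1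
  · -- Chebyshev branch
    have cheb := tail_le_weight h hN (fun k : ℕ => r < |(k:ℝ) - μ|)
      (fun k => ((k:ℝ) - μ)^2 / r^2)
      (fun k hk => by
        rw [le_div_iff₀ (by positivity)]
        nlinarith [abs_nonneg ((k:ℝ) - μ), sq_abs ((k:ℝ) - μ)])
      (fun k => by positivity)
    rw [S_div, S_c2', hr2] at cheb
    have hb : V / (4 * L * V) = 1 / (4 * L) := by field_simp
    rw [hb] at cheb
    refine lt_of_le_of_lt cheb ?_
    have hkey : Real.exp L < 4 * L := by
      have h1 := Real.add_one_le_exp (1 - L)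
      have h2 : (2 - L) * Real.exp L ≤ Real.exp 1 := by
        have hee : Real.exp (1 - L) * Real.exp L = Real.exp 1 := by
          rw [← Real.exp_add]; ring_nf
        nlinarith [Real.exp_pos L]
      have h3 : (0:ℝ) ≤ L - 0.6931471803 := by linarith
      have h4 : (0:ℝ) ≤ 1 - L := by linarith
      nlinarith [mul_nonneg h3 h4, Real.exp_pos L]
    rw [Real.exp_neg, one_div, inv_lt_inv₀ (by positivity) (Real.exp_pos L)]
    exact hkey
  · rcases le_or_gt L 3 with hL3 | hL3
    · -- fourth moment branch
      have quart := tail_le_weight h hN (fun k : ℕ => r < |(k:ℝ) - μ|)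
        (fun k => ((k:ℝ) - μ)^4 / r^4)
        (fun k hk => by
          rw [le_div_iff₀ (by positivity)]
          have habs : r^4 ≤ |(k:ℝ) - μ|^4 := pow_le_pow_left₀ hr0.le (le_of_lt hk) 4
          have heq : |(k:ℝ) - μ|^4 = ((k:ℝ) - μ)^4 := by
            rw [← abs_pow]; exact abs_of_nonneg (by positivity)
          linarith)
        (fun k => by positivity)
      rw [S_div] at quart
      have hr4 : r^4 = 16 * L^2 * V^2 := by
        have he : r^4 = (r^2)^2 := by ring
        rw [he, hr2]; ring
      have hm4 := S_m4_le h
      have hub : S ps (fun k => ((k:ℝ) - μ)^4) / r^4 ≤ (3*V^2 + V) / (16 * L^2 * V^2) := by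
        rw [hr4]; gcongr
      have hkey : Real.exp L < 4 * L^2 := by
        rcases le_or_gt L 2 with h2 | h2
        · have h1 := Real.add_one_le_exp (2 - L)
          have hmul : (3 - L) * Real.exp L ≤ Real.exp 1 ^ 2 := by
            have hee : Real.exp (2 - L) * Real.exp L = Real.exp 1 ^ 2 := by
              rw [← Real.exp_add, Real.exp_one_pow]; norm_num
            calc (3 - L) * Real.exp L ≤ Real.exp (2 - L) * Real.exp L :=
                mul_le_mul_of_nonneg_right (by linarith) (Real.exp_pos L).le
              _ = Real.exp 1 ^ 2 := hee
          have hE2 : Real.exp 1 ^ 2 < 7.3890561 := by nlinarith [hexpe, Real.exp_pos 1]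
          have hpoly : (7.3890561 : ℝ) < (3 - L) * (4 * L^2) := by
            nlinarith [mul_nonneg (mul_nonneg (by linarith : (0:ℝ) ≤ L - 1)
              (by linarith : (0:ℝ) ≤ L)) (by linarith : (0:ℝ) ≤ 2 - L),
              (by linarith : (0:ℝ) ≤ L - 1)]
          have hfin : (3 - L) * Real.exp L < (3 - L) * (4 * L^2) := by linarith
          exact lt_of_mul_lt_mul_left hfin (by linarith : (0:ℝ) ≤ 3 - L)
        · have h1 := Real.add_one_le_exp (3 - L)
          have hmul : (4 - L) * Real.exp L ≤ Real.exp 1 ^ 3 := by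
            have hee : Real.exp (3 - L) * Real.exp L = Real.exp 1 ^ 3 := by
              rw [← Real.exp_add, Real.exp_one_pow]; norm_num
            calc (4 - L) * Real.exp L ≤ Real.exp (3 - L) * Real.exp L :=
                mul_le_mul_of_nonneg_right (by linarith) (Real.exp_pos L).le
              _ = Real.exp 1 ^ 3 := hee
          have hE3 : Real.exp 1 ^ 3 < 20.0855370 := by
            nlinarith [hexpe, Real.exp_pos 1, sq_nonneg (Real.exp 1)]
          have hpoly : (20.0855370 : ℝ) < (4 - L) * (4 * L^2) := by
            nlinarith [mul_nonneg (mul_nonneg (by linarith : (0:ℝ) ≤ L - 2)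
              (by linarith : (0:ℝ) ≤ 3 - L)) (by linarith : (0:ℝ) ≤ L + 1),
              (by linarith : (0:ℝ) ≤ L - 2)]
          have hfin : (4 - L) * Real.exp L < (4 - L) * (4 * L^2) := by linarith
          exact lt_of_mul_lt_mul_left hfin (by linarith : (0:ℝ) ≤ 4 - L)
      refine lt_of_le_of_lt (quart.trans hub) ?_
      rw [Real.exp_neg, div_lt_iff₀ (by positivity), inv_mul_eq_div,
        lt_div_iff₀ (Real.exp_pos L)]
      have hV1 : (1:ℝ) ≤ V := by linarith
      have hVV : V ≤ V^2 := by nlinarith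
      have hmm : (3*V^2 + V) * Real.exp L < (3*V^2 + V) * (4*L^2) :=
        mul_lt_mul_of_pos_left hkey (by positivity)
      have hmm2 : (3*V^2 + V) * (4*L^2) ≤ 16 * L^2 * V^2 := by nlinarith [sq_nonneg L]
      linarith
    · -- Chernoff/Bennett branch
      set s := Real.sqrt L / Real.sqrt V with hsdef
      have hs0 : 0 ≤ s := by positivity
      have hs1 : s ≤ 1 := by
        rw [hsdef, div_le_one hsV0]
        exact Real.sqrt_le_sqrt hLV
      have hs2 : s^2 = L / V := by rw [hsdef, div_pow, hsL, hsV]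
      have hsr : s * r = 2 * L := by
        rw [hsdef, hrdef]; field_simp; linear_combination hsL
      have hVg : V * (Real.exp s - 1 - s) ≤ 3/4 * L := by
        have hg := g_le_three_quarter hs0 hs1
        have : V * (Real.exp s - 1 - s) ≤ V * (3/4 * s^2) :=
          mul_le_mul_of_nonneg_left hg hV0.le
        rw [hs2] at this
        calc V * (Real.exp s - 1 - s) ≤ V * (3/4 * (L/V)) := this
          _ = 3/4 * L := by field_simp
      have bound_up : ∑ k ∈ (Finset.range N).filter (fun k : ℕ => μ + r < (k:ℝ)), pbd ps k
          ≤ Real.exp (-(5/4 * L)) := by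
        have hw := tail_le_weight h hN (fun k : ℕ => μ + r < (k:ℝ))
          (fun k => Real.exp (s * ((k:ℝ) - (μ + r))))
          (fun k hk => Real.one_le_exp (by nlinarith))
          (fun k => (Real.exp_pos _).le)
        have hS : S ps (fun k => Real.exp (s * ((k:ℝ) - (μ + r))))
            = Real.exp (-(s * (μ + r))) * S ps (fun k => Real.exp (s * (k:ℝ))) := by
          rw [show (fun k : ℕ => Real.exp (s * ((k:ℝ) - (μ + r))))
              = (fun k : ℕ => Real.exp (-(s * (μ + r))) * Real.exp (s * (k:ℝ))) from
            funext fun k => by rw [← Real.exp_add]; congr 1; ring]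
          simp only [S, Finset.mul_sum, mul_assoc]
        rw [hS] at hw
        have hmgf := S_exp_le h hs0
        refine hw.trans ?_
        calc Real.exp (-(s * (μ + r))) * S ps (fun k => Real.exp (s * (k:ℝ)))
            ≤ Real.exp (-(s * (μ + r))) * Real.exp (s * μ + V * (Real.exp s - 1 - s)) :=
              mul_le_mul_of_nonneg_left hmgf (Real.exp_pos _).le
          _ = Real.exp (-(s * r) + V * (Real.exp s - 1 - s)) := by
              rw [← Real.exp_add]; congr 1; ring
          _ ≤ Real.exp (-(5/4 * L)) := by
              apply Real.exp_le_exp.2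
              rw [hsr]; linarith
      have bound_down : ∑ k ∈ (Finset.range N).filter (fun k : ℕ => (k:ℝ) < μ - r), pbd ps k
          ≤ Real.exp (-(5/4 * L)) := by
        have hw := tail_le_weight h hN (fun k : ℕ => (k:ℝ) < μ - r)
          (fun k => Real.exp (s * ((μ - r) - (k:ℝ))))
          (fun k hk => Real.one_le_exp (by nlinarith))
          (fun k => (Real.exp_pos _).le)
        have hS : S ps (fun k => Real.exp (s * ((μ - r) - (k:ℝ))))
            = Real.exp (s * (μ - r)) * S ps (fun k => Real.exp (-(s * (k:ℝ)))) := by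
          rw [show (fun k : ℕ => Real.exp (s * ((μ - r) - (k:ℝ))))
              = (fun k : ℕ => Real.exp (s * (μ - r)) * Real.exp (-(s * (k:ℝ)))) from
            funext fun k => by rw [← Real.exp_add]; congr 1; ring]
          simp only [S, Finset.mul_sum, mul_assoc]
        rw [hS] at hw
        have hmgf := S_exp_neg_le h hs0
        refine hw.trans ?_
        calc Real.exp (s * (μ - r)) * S ps (fun k => Real.exp (-(s * (k:ℝ))))
            ≤ Real.exp (s * (μ - r)) * Real.exp (-(s * μ) + V * (Real.exp s - 1 - s)) :=
              mul_le_mul_of_nonneg_left hmgf (Real.exp_pos _).le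
          _ = Real.exp (-(s * r) + V * (Real.exp s - 1 - s)) := by
              rw [← Real.exp_add]; congr 1; ring
          _ ≤ Real.exp (-(5/4 * L)) := by
              apply Real.exp_le_exp.2
              rw [hsr]; linarith
      have hdisj : Disjoint ((Finset.range N).filter (fun k : ℕ => μ + r < (k:ℝ)))
          ((Finset.range N).filter (fun k : ℕ => (k:ℝ) < μ - r)) := by
        rw [Finset.disjoint_left]
        intro k h1 h2
        simp only [Finset.mem_filter] at h1 h2
        linarith [h1.2, h2.2]
      have hsplit : (Finset.range N).filter (fun k : ℕ => r < |(k:ℝ) - μ|)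
          ⊆ ((Finset.range N).filter (fun k : ℕ => μ + r < (k:ℝ)))
            ∪ ((Finset.range N).filter (fun k : ℕ => (k:ℝ) < μ - r)) := by
        intro k hk
        simp only [Finset.mem_filter, Finset.mem_union] at hk ⊢
        rcases lt_abs.1 hk.2 with hc | hc
        · exact Or.inl ⟨hk.1, by linarith⟩
        · exact Or.inr ⟨hk.1, by linarith⟩
      calc ∑ k ∈ (Finset.range N).filter (fun k : ℕ => r < |(k:ℝ) - μ|), pbd ps k
          ≤ ∑ k ∈ ((Finset.range N).filter (fun k : ℕ => μ + r < (k:ℝ)))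
              ∪ ((Finset.range N).filter (fun k : ℕ => (k:ℝ) < μ - r)), pbd ps k := by
            refine Finset.sum_le_sum_of_subset_of_nonneg hsplit ?_
            intro k _ _; exact pbd_nonneg h k
        _ = ∑ k ∈ (Finset.range N).filter (fun k : ℕ => μ + r < (k:ℝ)), pbd ps k
            + ∑ k ∈ (Finset.range N).filter (fun k : ℕ => (k:ℝ) < μ - r), pbd ps k :=
            Finset.sum_union hdisj
        _ ≤ Real.exp (-(5/4 * L)) + Real.exp (-(5/4 * L)) := add_le_add bound_up bound_down
        _ < Real.exp (-L) := by
            have he : Real.exp (-(5/4 * L)) + Real.exp (-(5/4 * L))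
                = Real.exp (Real.log 2) * Real.exp (-(5/4 * L)) := by
              rw [Real.exp_log (by norm_num : (0:ℝ) < 2)]; ring
            rw [he, ← Real.exp_add]
            apply Real.exp_lt_exp.2
            have hup : Real.log 2 < 0.6931471808 := Real.log_two_lt_d9
            linarith

lemma pmfMean_eq (ps : List ℝ) : pmfMean (pbd ps) = ps.sum := by
  rw [pmfMean, tsum_eq_sum (s := Finset.range (ps.length + 1))
    (fun b hb => by rw [pbd_eq_zero (by simp at hb; omega), mul_zero])]
  exact S_mean

lemma pmfVar_eq (ps : List ℝ) : pmfVar (pbd ps) = listVar ps := by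
  rw [pmfVar, pmfMean_eq, tsum_eq_sum (s := Finset.range (ps.length + 1))
    (fun b hb => by rw [pbd_eq_zero (by simp at hb; omega), mul_zero])]
  exact S_c2'

end PbdAux

set_option maxHeartbeats 2000000 in
open PbdAux in
/-- Let `X`, `Y` be PBDs with means `μ_X, μ_Y`, variances `σ_X², σ_Y²`. For any
    `ε ∈ (0,1)` with `σ_X², σ_Y² ≥ ln(2/(1-ε))`, if
    `|μ_Y - μ_X| > 2√(ln(2/(1-ε)))(σ_X + σ_Y)` then `d_TV(X,Y) > ε`. -/
theorem pbd_tvd_lower_bound (ps qs : List ℝ)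
    (hps : ∀ p ∈ ps, p ∈ Set.Icc (0 : ℝ) 1) (hqs : ∀ q ∈ qs, q ∈ Set.Icc (0 : ℝ) 1)
    (ε : ℝ) (hε0 : 0 < ε) (hε1 : ε < 1)
    (μX μY σX σY : ℝ)
    (hμX : μX = pmfMean (pbd ps)) (hμY : μY = pmfMean (pbd qs))
    (hσX : σX = Real.sqrt (pmfVar (pbd ps))) (hσY : σY = Real.sqrt (pmfVar (pbd qs)))
    (hvarX : Real.log (2 / (1 - ε)) ≤ σX ^ 2)
    (hvarY : Real.log (2 / (1 - ε)) ≤ σY ^ 2)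
    (hmeans : 2 * Real.sqrt (Real.log (2 / (1 - ε))) * (σX + σY) < |μY - μX|) :
    ε < tvDist (pbd ps) (pbd qs) := by

  classical
  have hips : IsP ps := hps
  have hiqs : IsP qs := hqs
  have h1ε : (0:ℝ) < 1 - ε := by linarith
  set L := Real.log (2 / (1 - ε)) with hLdef
  have hfrac : (0:ℝ) < 2 / (1 - ε) := by positivity
  have h2frac : (2:ℝ) < 2 / (1 - ε) := by rw [lt_div_iff₀ h1ε]; nlinarith
  have hL2 : Real.log 2 < L := Real.log_lt_log (by norm_num) h2frac
  have hlog2pos : (0:ℝ) < Real.log 2 := Real.log_pos (by norm_num)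
  have hL0 : (0:ℝ) < L := lt_trans hlog2pos hL2
  have hexpL : Real.exp (-L) = (1 - ε) / 2 := by
    rw [hLdef, Real.exp_neg, Real.exp_log hfrac, inv_div]
  have hVX0 : 0 ≤ listVar ps := listVar_nonneg hips
  have hVY0 : 0 ≤ listVar qs := listVar_nonneg hiqs
  have hσX' : σX = Real.sqrt (listVar ps) := by rw [hσX, pmfVar_eq]
  have hσY' : σY = Real.sqrt (listVar qs) := by rw [hσY, pmfVar_eq]
  have hLVX : L ≤ listVar ps := by
    have := hvarX
    rwa [hσX', Real.sq_sqrt hVX0] at this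
  have hLVY : L ≤ listVar qs := by
    have := hvarY
    rwa [hσY', Real.sq_sqrt hVY0] at this
  set N := max ps.length qs.length + 1 with hNdef
  have hNp : ps.length < N := by omega
  have hNq : qs.length < N := by omega
  have tailX := tail_master hips hL2 hLVX hNp
  have tailY := tail_master hiqs hL2 hLVY hNq
  set rX := 2 * Real.sqrt L * Real.sqrt (listVar ps) with hrXdef
  set rY := 2 * Real.sqrt L * Real.sqrt (listVar qs) with hrYdef
  set TX : ℕ → Prop := fun k => rX < |(k:ℝ) - ps.sum| with hTXdef
  set TY : ℕ → Prop := fun k => rY < |(k:ℝ) - qs.sum| with hTYdef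
  have htotX : ∑ k ∈ Finset.range N, pbd ps k = 1 := by
    have h1 := sum_pbd_ext hNp (fun _ => (1:ℝ))
    rw [S_one] at h1
    simpa using h1
  have htotY : ∑ k ∈ Finset.range N, pbd qs k = 1 := by
    have h1 := sum_pbd_ext hNq (fun _ => (1:ℝ))
    rw [S_one] at h1
    simpa using h1
  have hsplitX := Finset.sum_filter_add_sum_filter_not (Finset.range N) TX (pbd ps)
  have hsplitY := Finset.sum_filter_add_sum_filter_not (Finset.range N) TX (pbd qs)
  set A := (Finset.range N).filter (fun k => ¬ TX k) with hAdef
  have hPA : 1 - Real.exp (-L) < ∑ k ∈ A, pbd ps k := by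
    rw [htotX] at hsplitX
    have : ∑ k ∈ (Finset.range N).filter (fun k => TX k), pbd ps k < Real.exp (-L) := tailX
    linarith
  have hsub : A ⊆ (Finset.range N).filter (fun k => TY k) := by
    intro k hk
    rw [hAdef, Finset.mem_filter] at hk
    rw [Finset.mem_filter]
    refine ⟨hk.1, ?_⟩
    have hkX : |(k:ℝ) - ps.sum| ≤ rX := not_lt.1 hk.2
    have htri : |qs.sum - ps.sum| ≤ |qs.sum - (k:ℝ)| + |(k:ℝ) - ps.sum| :=
      abs_sub_le qs.sum (k:ℝ) ps.sum
    have hmn : rX + rY < |qs.sum - ps.sum| := by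
      have h1 : μY - μX = qs.sum - ps.sum := by rw [hμX, hμY, pmfMean_eq, pmfMean_eq]
      have h2 := hmeans
      rw [h1] at h2
      rw [hσX', hσY'] at h2
      calc rX + rY = 2 * Real.sqrt L * (Real.sqrt (listVar ps) + Real.sqrt (listVar qs)) := by
            rw [hrXdef, hrYdef]; ring
        _ < |qs.sum - ps.sum| := h2
    show rY < |(k:ℝ) - qs.sum|
    rw [abs_sub_comm]
    linarith
  have hQA : ∑ k ∈ A, pbd qs k < Real.exp (-L) := by
    refine lt_of_le_of_lt (Finset.sum_le_sum_of_subset_of_nonneg hsub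
      (fun k _ _ => pbd_nonneg hiqs k)) tailY
  have htv : tvDist (pbd ps) (pbd qs)
      = (1/2) * ∑ k ∈ Finset.range N, |pbd ps k - pbd qs k| := by
    rw [tvDist]
    congr 1
    refine tsum_eq_sum (fun b hb => ?_)
    have hbN : N ≤ b := by simpa using hb
    rw [pbd_eq_zero (by omega), pbd_eq_zero (by omega), sub_zero, abs_zero]
  have hsplitAbs := Finset.sum_filter_add_sum_filter_not (Finset.range N)
    TX (fun k => |pbd ps k - pbd qs k|)
  have hbound1 : ∑ k ∈ (Finset.range N).filter (fun k => TX k), (pbd qs k - pbd ps k)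
      ≤ ∑ k ∈ (Finset.range N).filter (fun k => TX k), |pbd ps k - pbd qs k| := by
    refine Finset.sum_le_sum (fun k _ => ?_)
    rw [abs_sub_comm]
    exact le_abs_self _
  have hbound2 : ∑ k ∈ A, (pbd ps k - pbd qs k) ≤ ∑ k ∈ A, |pbd ps k - pbd qs k| :=
    Finset.sum_le_sum (fun k _ => le_abs_self _)
  have hsum1 : ∑ k ∈ (Finset.range N).filter (fun k => TX k), (pbd qs k - pbd ps k)
      = (1 - ∑ k ∈ A, pbd qs k) - (1 - ∑ k ∈ A, pbd ps k) := by
    rw [Finset.sum_sub_distrib]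
    rw [htotX] at hsplitX
    rw [htotY] at hsplitY
    rw [hAdef]
    linarith [hsplitX, hsplitY]
  have hsum2 : ∑ k ∈ A, (pbd ps k - pbd qs k)
      = ∑ k ∈ A, pbd ps k - ∑ k ∈ A, pbd qs k := Finset.sum_sub_distrib _ _
  have hfinal : ∑ k ∈ A, pbd ps k - ∑ k ∈ A, pbd qs k
      ≤ (1/2) * ∑ k ∈ Finset.range N, |pbd ps k - pbd qs k| := by
    have := hsplitAbs
    nlinarith [hbound1, hbound2, hsum1, hsum2]
  rw [htv]
  have hgap : ε < ∑ k ∈ A, pbd ps k - ∑ k ∈ A, pbd qs k := by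
    have : (1 - Real.exp (-L)) - Real.exp (-L) = ε := by rw [hexpL]; ring
    linarith
  linarith
end

section
/- Let p ∈ (0,1), let ε < 1/2 and n ≥ 1, and let q ∈ (0,1) satisfy |p − q| ≤ ε·√(p(1−p)/n). Then the total variation distance between the binomial distributions B(n,q) and B(n,p) is at most 2√e·ε. -/
/-- The mass function of the binomial distribution `B(n,p)`. -/
noncomputable def binomPMF (n : ℕ) (p : ℝ) (k : ℕ) : ℝ :=
  (n.choose k : ℝ) * p ^ k * (1 - p) ^ (n - k)

lemma binomPMF_nonneg {n : ℕ} {p : ℝ} (hp0 : 0 ≤ p) (hp1 : p ≤ 1) (k : ℕ) :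
    0 ≤ binomPMF n p k := by
  unfold binomPMF
  have : (0:ℝ) ≤ 1 - p := by linarith
  positivity

lemma binom_sum (x y : ℝ) (n : ℕ) :
    ∑ k ∈ Finset.range (n+1), (n.choose k : ℝ) * x ^ k * y ^ (n-k) = (x + y)^n := by
  rw [add_pow]
  exact Finset.sum_congr rfl fun k _ => by ring

lemma binomPMF_sum {n : ℕ} {p : ℝ} :
    ∑ k ∈ Finset.range (n+1), binomPMF n p k = 1 := by
  unfold binomPMF
  rw [binom_sum p (1-p) n]
  norm_num


lemma aux_sq_sub_sq (x y : ℝ) (hx : 0 ≤ x) (hy : 0 ≤ y) :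
    x^2 * (x - y)^2 ≤ (x^2 - y^2)^2 := by
  nlinarith [mul_nonneg (sq_nonneg (x - y)) (mul_nonneg hx hy),
    mul_nonneg (sq_nonneg (x - y)) (sq_nonneg y)]

lemma aux_bhatta (x y u v : ℝ) (hx : 0 ≤ x) (hy : 0 ≤ y) (hu : 0 ≤ u) (hv : 0 ≤ v)
    (hxu : x^2 + u^2 = 1) (hyv : y^2 + v^2 = 1) : x*y + u*v ≤ 1 := by
  nlinarith [sq_nonneg (x*v - y*u), mul_nonneg (mul_nonneg hx hy) (mul_nonneg hu hv)]

lemma aux_quad (x : ℝ) (h1 : x ≤ 1) : (2 - 2*x) * (2 + 2*x) ≤ 8 * (1 - x) := by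
  nlinarith [sq_nonneg (x - 1)]

lemma aux_sqle (S e : ℝ) (hS : 0 ≤ S) (he : 0 < e) (h : S^2 ≤ 4*e^2) : S ≤ 2*e := by
  nlinarith

lemma aux_combine (P X Y D : ℝ) (hP0 : 0 ≤ P) (hP1 : P ≤ 1)
    (h1 : P * X ≤ D) (h2 : (1 - P) * Y ≤ D) (hX : 0 ≤ X) (hY : 0 ≤ Y) :
    P * (1 - P) * (X + Y) ≤ D := by
  nlinarith [mul_le_mul_of_nonneg_left h1 (by linarith : (0:ℝ) ≤ 1 - P),
    mul_le_mul_of_nonneg_left h2 hP0]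

/-- If `p ∈ (0,1)`, `0 < ε < 1/2`, `n ≥ 1` and `q ∈ (0,1)` satisfies
    `|p - q| ≤ ε √(p(1-p)/n)`, then `d_TV(B(n,q), B(n,p)) ≤ 2√e·ε`. -/
theorem binomial_tvd_of_close_params (n : ℕ) (hn : 1 ≤ n) (p q ε : ℝ)
    (hp : p ∈ Set.Ioo (0 : ℝ) 1) (hq : q ∈ Set.Ioo (0 : ℝ) 1)
    (hε0 : 0 < ε) (hε : ε < 1 / 2)
    (hclose : |p - q| ≤ ε * Real.sqrt (p * (1 - p) / n)) :
    tvDist (binomPMF n q) (binomPMF n p) ≤ 2 * Real.sqrt (Real.exp 1) * ε := by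
  obtain ⟨hp0, hp1⟩ := hp
  obtain ⟨hq0, hq1⟩ := hq
  have hp1' : (0:ℝ) < 1 - p := by linarith
  have hq1' : (0:ℝ) < 1 - q := by linarith
  have hn0 : (0:ℝ) < n := by exact_mod_cast hn
  set s := Finset.range (n+1) with hs
  set a : ℕ → ℝ := fun k => Real.sqrt (binomPMF n p k) with ha
  set b : ℕ → ℝ := fun k => Real.sqrt (binomPMF n q k) with hb
  have hap : ∀ k, a k ^ 2 = binomPMF n p k := fun k =>
    Real.sq_sqrt (binomPMF_nonneg hp0.le hp1.le k)
  have hbq : ∀ k, b k ^ 2 = binomPMF n q k := fun k =>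
    Real.sq_sqrt (binomPMF_nonneg hq0.le hq1.le k)
  have hann : ∀ k, 0 ≤ a k := fun k => Real.sqrt_nonneg _
  have hbnn : ∀ k, 0 ≤ b k := fun k => Real.sqrt_nonneg _
  -- square roots of the parameters
  set sp := Real.sqrt p with hsp'
  set sq' := Real.sqrt q with hsq''
  set tp := Real.sqrt (1-p) with htp'
  set tq := Real.sqrt (1-q) with htq'
  have hsp : sp^2 = p := Real.sq_sqrt hp0.le
  have hsq : sq'^2 = q := Real.sq_sqrt hq0.le
  have htp : tp^2 = 1-p := Real.sq_sqrt hp1'.le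
  have htq : tq^2 = 1-q := Real.sq_sqrt hq1'.le
  have hspn : 0 ≤ sp := Real.sqrt_nonneg _
  have hsqn : 0 ≤ sq' := Real.sqrt_nonneg _
  have htpn : 0 ≤ tp := Real.sqrt_nonneg _
  have htqn : 0 ≤ tq := Real.sqrt_nonneg _
  -- Bhattacharyya coefficient
  set ρ := sp*sq' + tp*tq with hρ
  have hρnn : 0 ≤ ρ := by positivity
  have hρle1 : ρ ≤ 1 := by
    rw [hρ]
    exact aux_bhatta sp sq' tp tq hspn hsqn htpn htqn (by rw [hsp, htp]; ring)
      (by rw [hsq, htq]; ring)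
  -- pointwise formula for a k * b k
  have hab : ∀ k, a k * b k = (n.choose k : ℝ) * (sp*sq')^k * (tp*tq)^(n-k) := by
    intro k
    set t := (n.choose k : ℝ) * (sp*sq')^k * (tp*tq)^(n-k) with ht
    have htnn : 0 ≤ t := by positivity
    have hkey : binomPMF n p k * binomPMF n q k = t^2 := by
      have h1 : t^2 = (n.choose k : ℝ)^2 * (sp^2 * sq'^2)^k * (tp^2 * tq^2)^(n-k) := by
        rw [ht]; ring
      rw [h1, hsp, hsq, htp, htq]
      unfold binomPMF
      rw [mul_pow, mul_pow]
      ring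
    calc a k * b k = Real.sqrt (binomPMF n p k * binomPMF n q k) :=
          (Real.sqrt_mul (binomPMF_nonneg hp0.le hp1.le k) _).symm
      _ = Real.sqrt (t^2) := by rw [hkey]
      _ = t := Real.sqrt_sq htnn
  -- sum of a*b equals ρ^n
  have hsum_ab : ∑ k ∈ s, a k * b k = ρ^n := by
    rw [hs]
    calc ∑ k ∈ Finset.range (n+1), a k * b k
        = ∑ k ∈ Finset.range (n+1), (n.choose k : ℝ) * (sp*sq')^k * (tp*tq)^(n-k) :=
          Finset.sum_congr rfl fun k _ => hab k
      _ = ρ^n := binom_sum _ _ n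
  have hsum_aa : ∑ k ∈ s, a k ^ 2 = 1 := by
    simp only [hap]; exact binomPMF_sum
  have hsum_bb : ∑ k ∈ s, b k ^ 2 = 1 := by
    simp only [hbq]; exact binomPMF_sum
  -- ρ^n bounds
  have hρn_le1 : ρ^n ≤ 1 := pow_le_one₀ hρnn hρle1
  have hρn_nn : 0 ≤ ρ^n := pow_nonneg hρnn n
  -- the closeness bound, squared
  have hsq_close : (p - q)^2 ≤ ε^2 * (p * (1-p) / n) := by
    have h1 : |p - q|^2 ≤ (ε * Real.sqrt (p * (1-p) / n))^2 := by
      apply pow_le_pow_left₀ (abs_nonneg _) hclose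
    rw [sq_abs] at h1
    have h2 : (Real.sqrt (p * (1-p) / n))^2 = p * (1-p)/n :=
      Real.sq_sqrt (by positivity)
    calc (p-q)^2 ≤ (ε * Real.sqrt (p * (1-p) / n))^2 := h1
      _ = ε^2 * (p * (1-p)/n) := by rw [mul_pow, h2]
  -- key bound: 2 * n * (1 - ρ) ≤ ε^2
  have hkey2 : 2 * (n:ℝ) * (1 - ρ) ≤ ε^2 := by
    have e1 := aux_sq_sub_sq sp sq' hspn hsqn
    rw [hsp, hsq] at e1
    have e2 := aux_sq_sub_sq tp tq htpn htqn
    rw [htp, htq] at e2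
    have e2' : (1-p) * (tp - tq)^2 ≤ (p - q)^2 := by
      calc (1-p) * (tp - tq)^2 ≤ ((1-p) - (1-q))^2 := e2
        _ = (p - q)^2 := by ring
    have e1' : p * (sp - sq')^2 ≤ (p - q)^2 := e1
    have eρ : 2 * (1 - ρ) = (sp - sq')^2 + (tp - tq)^2 := by
      rw [hρ]; linear_combination - hsp - hsq - htp - htq
    have e3 : p * (1-p) * (2 * (1 - ρ)) ≤ (p - q)^2 := by
      rw [eρ]
      exact aux_combine p _ _ _ hp0.le hp1.le e1' e2' (sq_nonneg _) (sq_nonneg _)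
    have e4 : (p - q)^2 ≤ ε^2 * (p * (1-p)) / n := by
      calc (p-q)^2 ≤ ε^2 * (p * (1-p) / n) := hsq_close
        _ = ε^2 * (p * (1-p)) / n := by ring
    have hpp : 0 < p * (1-p) := by positivity
    rw [le_div_iff₀ hn0] at e4
    rw [← mul_le_mul_iff_right₀ hpp]
    have e5 := mul_le_mul_of_nonneg_right e3 hn0.le
    calc p * (1-p) * (2 * ↑n * (1 - ρ)) = p * (1-p) * (2 * (1 - ρ)) * n := by ring
      _ ≤ (p - q)^2 * n := e5
      _ ≤ ε^2 * (p * (1-p)) := e4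
      _ = p * (1-p) * ε^2 := by ring
  -- 1 - ρ^n ≤ n (1 - ρ)
  have hbern : 1 - ρ^n ≤ (n:ℝ) * (1 - ρ) := by
    have h := one_add_mul_le_pow (a := ρ - 1) (by linarith) n
    have h2 : (1 + (ρ - 1))^n = ρ^n := by norm_num
    rw [h2] at h
    have : (n:ℝ) * (ρ - 1) = -((n:ℝ) * (1 - ρ)) := by ring
    linarith [h]
  -- Cauchy-Schwarz step
  set S := ∑ k ∈ s, |binomPMF n q k - binomPMF n p k| with hS
  have hSnn : 0 ≤ S := Finset.sum_nonneg fun k _ => abs_nonneg _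
  have hterm : ∀ k, |binomPMF n q k - binomPMF n p k| = |b k - a k| * (a k + b k) := by
    intro k
    have : binomPMF n q k - binomPMF n p k = (b k - a k) * (a k + b k) := by
      rw [← hap k, ← hbq k]; ring
    rw [this, abs_mul, abs_of_nonneg (by positivity : (0:ℝ) ≤ a k + b k)]
  have hCS : S^2 ≤ (∑ k ∈ s, (b k - a k)^2) * (∑ k ∈ s, (a k + b k)^2) := by
    have := Finset.sum_mul_sq_le_sq_mul_sq s (fun k => |b k - a k|) (fun k => a k + b k)
    simp only [sq_abs] at this
    calc S^2 = (∑ k ∈ s, |b k - a k| * (a k + b k))^2 := by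
          rw [hS]; congr 1; exact Finset.sum_congr rfl fun k _ => hterm k
      _ ≤ _ := this
  have hsub : ∑ k ∈ s, (b k - a k)^2 = 2 - 2 * ρ^n := by
    have : ∀ k, (b k - a k)^2 = b k^2 - 2*(a k * b k) + a k^2 := fun k => by ring
    simp only [this]
    rw [Finset.sum_add_distrib, Finset.sum_sub_distrib, ← Finset.mul_sum,
      hsum_aa, hsum_bb, hsum_ab]
    ring
  have hadd : ∑ k ∈ s, (a k + b k)^2 = 2 + 2 * ρ^n := by
    have : ∀ k, (a k + b k)^2 = a k^2 + 2*(a k * b k) + b k^2 := fun k => by ring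
    simp only [this]
    rw [Finset.sum_add_distrib, Finset.sum_add_distrib, ← Finset.mul_sum,
      hsum_aa, hsum_bb, hsum_ab]
    ring
  have hS2 : S^2 ≤ 4 * ε^2 := by
    have h1 : S^2 ≤ (2 - 2*ρ^n) * (2 + 2*ρ^n) := by rw [← hsub, ← hadd]; exact hCS
    have h2 : (2 - 2*ρ^n) * (2 + 2*ρ^n) ≤ 8 * (1 - ρ^n) := aux_quad _ hρn_le1
    have h3 : 8 * (1 - ρ^n) ≤ 8 * ((n:ℝ) * (1 - ρ)) := by linarith
    have h4 : 8 * ((n:ℝ) * (1 - ρ)) ≤ 4 * ε^2 := by linarith [hkey2]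
    linarith
  have hSle : S ≤ 2 * ε := aux_sqle S ε hSnn hε0 hS2
  -- reduce the tsum to the finite sum
  have htsum : ∑' k, |binomPMF n q k - binomPMF n p k| = S := by
    rw [hS]
    apply tsum_eq_sum
    intro k hk
    rw [hs, Finset.mem_range, not_lt] at hk
    have hck : n.choose k = 0 := Nat.choose_eq_zero_of_lt (by omega)
    unfold binomPMF
    rw [hck]
    norm_num
  have htv : tvDist (binomPMF n q) (binomPMF n p) = (1/2) * S := by
    rw [tvDist, htsum]
  rw [htv]
  have hsqrte : 1 ≤ Real.sqrt (Real.exp 1) := by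
    have h1 : (1:ℝ) ≤ Real.exp 1 := by linarith [Real.add_one_le_exp (1:ℝ)]
    calc (1:ℝ) = Real.sqrt 1 := by simp
      _ ≤ Real.sqrt (Real.exp 1) := Real.sqrt_le_sqrt h1
  calc (1/2) * S ≤ (1/2) * (2*ε) := by linarith
    _ = ε := by ring
    _ ≤ 2 * Real.sqrt (Real.exp 1) * ε :=
      le_mul_of_one_le_left hε0.le (by linarith)
end

section
/- Let D = √(e^C − 1)/C where C = 2 + W(−2/e²) (W the principal branch of the Lambert W function), and define ψ(p) = D·√(p/(1−p))·ln(1/p). Let p, q₁, q₂ ∈ (0,1) with q₁ < p < q₂, and let err(n,p,ε) = ε·√(p(1−p)/n). If p − q₁ ≤ ψ(p)·err(n,p,ε) and q₂ − p ≤ ψ(p)·err(n,p,ε), then for all real l ∈ (1,∞) we have p^l − q₁^l ≤ err(n, p^l, ε), and for all real l ∈ (0,1) we have q₂^l − p^l ≤ err(n, p^l, ε). -/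
/-- The error scale `err(n,p,ε) = ε √(p(1-p)/n)`. -/
noncomputable def errScale (n : ℕ) (p ε : ℝ) : ℝ := ε * Real.sqrt (p * (1 - p) / n)

lemma BAP_u_deriv (s : ℝ) :
    HasDerivAt (fun s => s * Real.exp s - 2*(Real.exp s - 1)) ((s-1)*Real.exp s) s := by
  have h : HasDerivAt (fun s => s * Real.exp s - 2*(Real.exp s - 1))
      (1 * Real.exp s + id s * Real.exp s - 2 * Real.exp s) s :=
    ((hasDerivAt_id s).mul (Real.hasDerivAt_exp s)).sub
    (((Real.hasDerivAt_exp s).sub_const 1).const_mul 2)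
  convert h using 1; simp [id]; ring

lemma BAP_u_nonpos (C : ℝ) (hC1 : 1 < C) (hCe : C * Real.exp C = 2*(Real.exp C - 1))
    {s : ℝ} (hs0 : 0 < s) (hsC : s ≤ C) :
    s * Real.exp s - 2*(Real.exp s - 1) ≤ 0 := by
  set u : ℝ → ℝ := fun s => s * Real.exp s - 2*(Real.exp s - 1) with hu
  have hcont : Continuous u := by fun_prop
  rcases le_or_gt s 1 with h1 | h1
  · have hant : AntitoneOn u (Set.Icc (0:ℝ) 1) := by
      apply antitoneOn_of_deriv_nonpos (convex_Icc 0 1) hcont.continuousOn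
        (fun x _ => (BAP_u_deriv x).differentiableAt.differentiableWithinAt)
      intro x hx
      rw [interior_Icc] at hx
      rw [(BAP_u_deriv x).deriv]
      have := Real.exp_pos x
      nlinarith [hx.1, hx.2]
    have h0 : u 0 = 0 := by simp [hu]
    have := hant ⟨le_refl 0, zero_le_one⟩ ⟨hs0.le, h1⟩ hs0.le
    rw [h0] at this
    exact this
  · have hmono : MonotoneOn u (Set.Icc (1:ℝ) C) := by
      apply monotoneOn_of_deriv_nonneg (convex_Icc 1 C) hcont.continuousOn
        (fun x _ => (BAP_u_deriv x).differentiableAt.differentiableWithinAt)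
      intro x hx
      rw [interior_Icc] at hx
      rw [(BAP_u_deriv x).deriv]
      have := Real.exp_pos x
      nlinarith [hx.1]
    have huC : u C = 0 := by simp only [hu]; linarith
    have := hmono ⟨h1.le, hsC⟩ ⟨hC1.le, le_refl C⟩ hsC
    rw [huC] at this
    exact this

lemma BAP_u_nonneg (C : ℝ) (hC1 : 1 < C) (hCe : C * Real.exp C = 2*(Real.exp C - 1))
    {s : ℝ} (hsC : C ≤ s) :
    0 ≤ s * Real.exp s - 2*(Real.exp s - 1) := by
  set u : ℝ → ℝ := fun s => s * Real.exp s - 2*(Real.exp s - 1) with hu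
  have hcont : Continuous u := by fun_prop
  have hmono : MonotoneOn u (Set.Icc (1:ℝ) s) := by
    apply monotoneOn_of_deriv_nonneg (convex_Icc 1 s) hcont.continuousOn
      (fun x _ => (BAP_u_deriv x).differentiableAt.differentiableWithinAt)
    intro x hx
    rw [interior_Icc] at hx
    rw [(BAP_u_deriv x).deriv]
    have := Real.exp_pos x
    nlinarith [hx.1]
  have huC : u C = 0 := by simp only [hu]; linarith
  have := hmono ⟨hC1.le, hsC⟩ ⟨le_trans hC1.le hsC, le_refl s⟩ hsC
  rw [huC] at this
  exact this

lemma BAP_g_deriv {s : ℝ} (hs : s ≠ 0) :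
    HasDerivAt (fun s => (Real.exp s - 1)/s^2)
      ((Real.exp s * s^2 - (Real.exp s - 1)*(2*s))/(s^2)^2) s := by
  have h : HasDerivAt (fun s => (Real.exp s - 1)/s^2)
      ((Real.exp s * s ^ 2 - (Real.exp s - 1) * (((2:ℕ):ℝ) * s ^ (2 - 1))) / (s ^ 2) ^ 2) s :=
    ((Real.hasDerivAt_exp s).sub_const 1).div (hasDerivAt_pow 2 s) (pow_ne_zero 2 hs)
  convert h using 1
  norm_num

lemma BAP_g_min (C : ℝ) (hC1 : 1 < C) (hCe : C * Real.exp C = 2*(Real.exp C - 1))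
    {s : ℝ} (hs0 : 0 < s) :
    (Real.exp C - 1)/C^2 ≤ (Real.exp s - 1)/s^2 := by
  have hC0 : (0:ℝ) < C := lt_trans one_pos hC1
  set g : ℝ → ℝ := fun s => (Real.exp s - 1)/s^2 with hg
  rcases le_or_gt s C with hsC | hsC
  · have hant : AntitoneOn g (Set.Icc s C) := by
      apply antitoneOn_of_deriv_nonpos (convex_Icc s C)
      · apply ContinuousOn.div (by fun_prop) (by fun_prop)
        intro x hx
        exact pow_ne_zero 2 (ne_of_gt (lt_of_lt_of_le hs0 hx.1))
      · intro x hx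
        rw [interior_Icc] at hx
        exact (BAP_g_deriv (ne_of_gt (lt_trans hs0 hx.1))).differentiableAt.differentiableWithinAt
      · intro x hx
        rw [interior_Icc] at hx
        have hx0 : 0 < x := lt_trans hs0 hx.1
        rw [(BAP_g_deriv hx0.ne').deriv]
        have hu := BAP_u_nonpos C hC1 hCe hx0 hx.2.le
        have hnum : Real.exp x * x^2 - (Real.exp x - 1)*(2*x)
            = x * (x * Real.exp x - 2*(Real.exp x - 1)) := by ring
        apply div_nonpos_of_nonpos_of_nonneg
        · rw [hnum]; exact mul_nonpos_of_nonneg_of_nonpos hx0.le hu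
        · positivity
    exact hant ⟨le_refl s, hsC⟩ ⟨hsC, le_refl C⟩ hsC
  · have hmono : MonotoneOn g (Set.Icc C s) := by
      apply monotoneOn_of_deriv_nonneg (convex_Icc C s)
      · apply ContinuousOn.div (by fun_prop) (by fun_prop)
        intro x hx
        exact pow_ne_zero 2 (ne_of_gt (lt_of_lt_of_le hC0 hx.1))
      · intro x hx
        rw [interior_Icc] at hx
        exact (BAP_g_deriv (ne_of_gt (lt_trans hC0 hx.1))).differentiableAt.differentiableWithinAt
      · intro x hx
        rw [interior_Icc] at hx
        have hx0 : 0 < x := lt_trans hC0 hx.1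
        rw [(BAP_g_deriv hx0.ne').deriv]
        have hu := BAP_u_nonneg C hC1 hCe hx.1.le
        have hnum : Real.exp x * x^2 - (Real.exp x - 1)*(2*x)
            = x * (x * Real.exp x - 2*(Real.exp x - 1)) := by ring
        apply div_nonneg
        · rw [hnum]; exact mul_nonneg hx0.le hu
        · positivity
    exact hmono ⟨le_refl C, hsC.le⟩ ⟨hsC.le, le_refl s⟩ hsC.le

lemma BAP_core (C : ℝ) (hC1 : 1 < C) (hCe : C * Real.exp C = 2*(Real.exp C - 1))
    (D : ℝ) (hD : D = Real.sqrt (Real.exp C - 1) / C)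
    {t : ℝ} (ht0 : 0 < t) (ht1 : t < 1) :
    D * (t * (-Real.log t)) ≤ Real.sqrt (t*(1-t)) := by
  have hC0 : (0:ℝ) < C := lt_trans one_pos hC1
  have heC : (1:ℝ) < Real.exp C := by
    calc (1:ℝ) = Real.exp 0 := (Real.exp_zero).symm
    _ < Real.exp C := Real.exp_lt_exp.mpr hC0
  set s : ℝ := -Real.log t with hs
  have hs0 : 0 < s := by
    have := Real.log_neg ht0 ht1
    simp only [hs]; linarith
  have hst : Real.exp s * t = 1 := by
    rw [hs, Real.exp_neg, Real.exp_log ht0]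
    field_simp
  have hkey : (Real.exp C - 1) * s^2 ≤ C^2 * (Real.exp s - 1) := by
    have h := BAP_g_min C hC1 hCe hs0
    rw [div_le_div_iff₀ (by positivity) (by positivity)] at h
    linarith
  have hD0 : 0 ≤ D := by rw [hD]; positivity
  have hD2 : D^2 = (Real.exp C - 1)/C^2 := by
    rw [hD, div_pow, Real.sq_sqrt (by linarith)]
  rw [Real.le_sqrt (by positivity) (by nlinarith)]
  have h2 : (Real.exp C - 1) * s^2 * t^2 ≤ C^2 * ((Real.exp s - 1) * t^2) := by
    nlinarith [sq_nonneg t]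
  have h3 : (Real.exp s - 1) * t^2 = t * (1-t) := by
    linear_combination t * hst
  rw [h3] at h2
  calc (D * (t * -Real.log t))^2 = D^2 * (s^2 * t^2) := by rw [hs]; ring
  _ = ((Real.exp C - 1) * s^2 * t^2)/C^2 := by rw [hD2]; ring
  _ ≤ (C^2 * (t * (1-t)))/C^2 := by exact div_le_div_of_nonneg_right h2 (by positivity)
  _ = t * (1-t) := by field_simp

lemma BAP_bridge (n : ℕ) (hn : 1 ≤ n) (ε : ℝ) (hε : 0 < ε)
    (C : ℝ) (hC1 : 1 < C) (hCe : C * Real.exp C = 2*(Real.exp C - 1))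
    (D : ℝ) (hD : D = Real.sqrt (Real.exp C - 1) / C)
    (ψ : ℝ → ℝ) (hψ : ∀ p : ℝ, ψ p = D * Real.sqrt (p / (1 - p)) * Real.log (1 / p))
    (p : ℝ) (hp0 : 0 < p) (hp1 : p < 1) (l : ℝ) (hl : 0 < l) :
    l * p ^ (l-1) * (ψ p * errScale n p ε) ≤ errScale n (p ^ l) ε := by
  have hn0 : (0:ℝ) < (n:ℝ) := by exact_mod_cast hn
  have h1p : 0 < 1 - p := by linarith
  set t : ℝ := p ^ l with ht
  have ht0 : 0 < t := Real.rpow_pos_of_pos hp0 l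
  have ht1 : t < 1 := Real.rpow_lt_one hp0.le hp1 hl
  have e1 : Real.sqrt (p/(1-p)) * Real.sqrt (p*(1-p)/n) = p / Real.sqrt n := by
    rw [← Real.sqrt_mul (by positivity)]
    rw [show (p/(1-p)) * (p*(1-p)/(n:ℝ)) = p^2/(n:ℝ) by field_simp]
    rw [Real.sqrt_div (sq_nonneg p), Real.sqrt_sq hp0.le]
  have e2 : Real.log (1/p) = - Real.log p := by rw [one_div, Real.log_inv]
  have e3 : p ^ (l-1) * p = t := by
    rw [ht]
    nth_rewrite 2 [← Real.rpow_one p]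
    rw [← Real.rpow_add hp0]
    norm_num
  have e4 : -Real.log t = l * (-Real.log p) := by
    rw [ht, Real.log_rpow hp0]; ring
  have hA : l * p ^ (l-1) * (ψ p * errScale n p ε)
      = (ε / Real.sqrt n) * (D * (t * (-Real.log t))) := by
    rw [hψ, errScale, e2, e4]
    calc l * p ^ (l-1) * (D * Real.sqrt (p/(1-p)) * (-Real.log p) * (ε * Real.sqrt (p*(1-p)/n)))
        = (l * (-Real.log p) * D * ε)
            * (p^(l-1) * (Real.sqrt (p/(1-p)) * Real.sqrt (p*(1-p)/n))) := by ring
      _ = (l * (-Real.log p) * D * ε) * ((p^(l-1) * p) / Real.sqrt n) := by rw [e1]; ring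
      _ = (ε / Real.sqrt n) * (D * (t * (l * (-Real.log p)))) := by rw [e3]; ring
  have hB : errScale n t ε = (ε / Real.sqrt n) * Real.sqrt (t*(1-t)) := by
    rw [errScale, Real.sqrt_div (by nlinarith)]
    ring
  rw [hA, hB]
  exact mul_le_mul_of_nonneg_left (BAP_core C hC1 hCe D hD ht0 ht1) (by positivity)

/-- With `C = 2 + W(-2/e²)` (so `(C-2)e^C = -2`, `0 < C < 2`),
    `D = √(e^C - 1)/C` and `ψ(p) = D √(p/(1-p)) ln(1/p)`: if
    `p - q₁ ≤ ψ(p)·err(n,p,ε)` and `q₂ - p ≤ ψ(p)·err(n,p,ε)` with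
    `q₁ < p < q₂` in `(0,1)`, then `p^l - q₁^l ≤ err(n,p^l,ε)` for all `l > 1`
    and `q₂^l - p^l ≤ err(n,p^l,ε)` for all `l ∈ (0,1)`. -/
theorem binomial_all_powers (n : ℕ) (hn : 1 ≤ n) (ε : ℝ) (hε : 0 < ε)
    (C : ℝ) (hC : (C - 2) * Real.exp C = -2) (hC0 : 0 < C) (hC2 : C < 2)
    (D : ℝ) (hD : D = Real.sqrt (Real.exp C - 1) / C)
    (ψ : ℝ → ℝ) (hψ : ∀ p : ℝ, ψ p = D * Real.sqrt (p / (1 - p)) * Real.log (1 / p))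
    (p q₁ q₂ : ℝ) (hp0 : 0 < p) (hp1 : p < 1) (hq₁0 : 0 < q₁) (hq₂1 : q₂ < 1)
    (hq₁p : q₁ < p) (hpq₂ : p < q₂)
    (h₁ : p - q₁ ≤ ψ p * errScale n p ε) (h₂ : q₂ - p ≤ ψ p * errScale n p ε) :
    (∀ l : ℝ, 1 < l → p ^ l - q₁ ^ l ≤ errScale n (p ^ l) ε) ∧
      (∀ l : ℝ, 0 < l → l < 1 → q₂ ^ l - p ^ l ≤ errScale n (p ^ l) ε) := by
  have hCe : C * Real.exp C = 2*(Real.exp C - 1) := by linear_combination hC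
  have hC1 : 1 < C := by
    have hexp : C + 1 < Real.exp C := Real.add_one_lt_exp (ne_of_gt hC0)
    nlinarith [mul_pos (by linarith : (0:ℝ) < 2 - C) (by linarith : (0:ℝ) < Real.exp C - C - 1)]
  constructor
  · intro l hl
    have hl0 : 0 < l := lt_trans one_pos hl
    obtain ⟨c, hc, hslope⟩ := exists_hasDerivAt_eq_slope (fun x => x ^ l)
      (fun x => l * x ^ (l-1)) hq₁p
      (fun x hx => (Real.hasDerivAt_rpow_const
        (Or.inl (ne_of_gt (lt_of_lt_of_le hq₁0 hx.1)))).continuousAt.continuousWithinAt)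
      (fun x hx => Real.hasDerivAt_rpow_const (Or.inl (ne_of_gt (lt_trans hq₁0 hx.1))))
    have hc0 : 0 < c := lt_trans hq₁0 hc.1
    rw [eq_div_iff (by linarith : p - q₁ ≠ 0)] at hslope
    have hcp : c ^ (l-1) ≤ p ^ (l-1) :=
      Real.rpow_le_rpow hc0.le hc.2.le (by linarith)
    have hfac : 0 ≤ l * p ^ (l-1) := by positivity
    calc p ^ l - q₁ ^ l = l * c ^ (l-1) * (p - q₁) := hslope.symm
      _ ≤ l * p ^ (l-1) * (p - q₁) := by
          apply mul_le_mul_of_nonneg_right _ (by linarith)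
          exact mul_le_mul_of_nonneg_left hcp hl0.le
      _ ≤ l * p ^ (l-1) * (ψ p * errScale n p ε) := mul_le_mul_of_nonneg_left h₁ hfac
      _ ≤ errScale n (p ^ l) ε := BAP_bridge n hn ε hε C hC1 hCe D hD ψ hψ p hp0 hp1 l hl0
  · intro l hl0 hl1
    obtain ⟨c, hc, hslope⟩ := exists_hasDerivAt_eq_slope (fun x => x ^ l)
      (fun x => l * x ^ (l-1)) hpq₂
      (fun x hx => (Real.hasDerivAt_rpow_const
        (Or.inl (ne_of_gt (lt_of_lt_of_le hp0 hx.1)))).continuousAt.continuousWithinAt)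
      (fun x hx => Real.hasDerivAt_rpow_const (Or.inl (ne_of_gt (lt_trans hp0 hx.1))))
    rw [eq_div_iff (by linarith : q₂ - p ≠ 0)] at hslope
    have hcp : c ^ (l-1) ≤ p ^ (l-1) :=
      Real.rpow_le_rpow_of_nonpos hp0 hc.1.le (by linarith)
    have hfac : 0 ≤ l * p ^ (l-1) := by positivity
    calc q₂ ^ l - p ^ l = l * c ^ (l-1) * (q₂ - p) := hslope.symm
      _ ≤ l * p ^ (l-1) * (q₂ - p) := by
          apply mul_le_mul_of_nonneg_right _ (by linarith)
          exact mul_le_mul_of_nonneg_left hcp hl0.le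
      _ ≤ l * p ^ (l-1) * (ψ p * errScale n p ε) := mul_le_mul_of_nonneg_left h₂ hfac
      _ ≤ errScale n (p ^ l) ε := BAP_bridge n hn ε hε C hC1 hCe D hD ψ hψ p hp0 hp1 l hl0
end

section
/- For the function f(l) = (p^{−l} − 1)/l² with fixed p ∈ (0,1), defined for l > 0: f is convex on (0,∞), attains its global minimum at l̄ = −C/ln(p) where C = 2 + W(−2/e²) ≈ 1.59362, and its minimum value is f(l̄) = ((e^C − 1)/C²)·(ln p)². -/
open Real Set in
private lemma exp_cubic_le' {t : ℝ} (ht : 0 ≤ t) : 1 + t + t^2/2 + t^3/6 ≤ Real.exp t := by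
  have h := Real.sum_le_exp_of_nonneg ht 4
  simp [Finset.sum_range_succ, Nat.factorial] at h
  linarith

open Real Set in
/-- `u(t) = (2-t)e^t` is strictly decreasing on `[1,∞)`. -/
private lemma u_strictAnti' : StrictAntiOn (fun t : ℝ => (2 - t) * Real.exp t) (Ici 1) := by
  apply strictAntiOn_of_deriv_neg (convex_Ici 1)
  · fun_prop
  · intro x hx
    rw [interior_Ici] at hx
    have hd : HasDerivAt (fun t : ℝ => (2 - t) * Real.exp t)
        ((0 - 1) * Real.exp x + (2 - x) * Real.exp x) x :=
      (HasDerivAt.sub (hasDerivAt_const x 2) (hasDerivAt_id x)).mul (Real.hasDerivAt_exp x)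
    rw [hd.deriv]
    have : (0 - 1) * Real.exp x + (2 - x) * Real.exp x = (1 - x) * Real.exp x := by ring
    rw [this]
    exact mul_neg_of_neg_of_pos (by linarith [mem_Ioi.mp hx]) (Real.exp_pos x)

open Real Set in
private lemma u_gt_small' {t : ℝ} (h0 : 0 < t) (h1 : t ≤ 1) : 2 < (2 - t) * Real.exp t := by
  have h := exp_cubic_le' h0.le
  nlinarith [pow_pos h0 3, pow_pos h0 4, pow_pos h0 2]

open Real Set in
private lemma one_lt_C' {C : ℝ} (hC : (C - 2) * Real.exp C = -2) (hC0 : 0 < C) : 1 < C := by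
  by_contra h
  push_neg at h
  have := u_gt_small' hC0 h
  nlinarith

open Real Set in
private lemma u_gt' {C : ℝ} (hC : (C - 2) * Real.exp C = -2) (hC0 : 0 < C)
    {t : ℝ} (h0 : 0 < t) (htC : t < C) : 2 < (2 - t) * Real.exp t := by
  rcases le_or_gt t 1 with h1 | h1
  · exact u_gt_small' h0 h1
  · have hC1 := one_lt_C' hC hC0
    have := u_strictAnti' (mem_Ici.mpr h1.le) (mem_Ici.mpr hC1.le) htC
    simp only at this
    nlinarith

open Real Set in
private lemma u_lt' {C : ℝ} (hC : (C - 2) * Real.exp C = -2) (hC0 : 0 < C)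
    {t : ℝ} (htC : C < t) : (2 - t) * Real.exp t < 2 := by
  have hC1 := one_lt_C' hC hC0
  have := u_strictAnti' (mem_Ici.mpr hC1.le) (mem_Ici.mpr (hC1.trans htC).le) htC
  simp only at this
  nlinarith

open Real Set in
private lemma hasDerivAt_g' {t : ℝ} (ht : t ≠ 0) :
    HasDerivAt (fun t : ℝ => (Real.exp t - 1) / t ^ 2)
      ((t * ((t - 2) * Real.exp t + 2)) / (t ^ 2) ^ 2) t := by
  have h := HasDerivAt.fun_div ((Real.hasDerivAt_exp t).sub_const 1)
    (hasDerivAt_pow 2 t) (pow_ne_zero 2 ht)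
  refine h.congr_deriv ?_
  push_cast
  ring

open Real Set in
/-- `g(t) = (e^t-1)/t²` attains its minimum over `(0,∞)` at `t = C`. -/
private lemma gmin' {C : ℝ} (hC : (C - 2) * Real.exp C = -2) (hC0 : 0 < C)
    {t : ℝ} (ht : 0 < t) :
    (Real.exp C - 1) / C ^ 2 ≤ (Real.exp t - 1) / t ^ 2 := by
  set g : ℝ → ℝ := fun t => (Real.exp t - 1) / t ^ 2 with hg
  have hcont : ∀ s : Set ℝ, (∀ x ∈ s, x ≠ 0) → ContinuousOn g s := by
    intro s hs
    exact ContinuousOn.div (by fun_prop) (by fun_prop) fun x hx => pow_ne_zero 2 (hs x hx)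
  have hanti : StrictAntiOn g (Ioc 0 C) := by
    apply strictAntiOn_of_deriv_neg (convex_Ioc 0 C)
    · exact hcont _ fun x hx => (hx.1).ne'
    · intro x hx
      rw [interior_Ioc] at hx
      rw [(hasDerivAt_g' hx.1.ne').deriv]
      apply div_neg_of_neg_of_pos
      · have := u_gt' hC hC0 hx.1 hx.2
        nlinarith [mul_pos hx.1 (sub_pos.mpr this)]
      · exact pow_pos (pow_pos hx.1 2) 2
  have hmono : StrictMonoOn g (Ici C) := by
    apply strictMonoOn_of_deriv_pos (convex_Ici C)
    · exact hcont _ fun x hx => (hC0.trans_le (mem_Ici.mp hx)).ne'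
    · intro x hx
      rw [interior_Ici] at hx
      have hx0 : 0 < x := hC0.trans (mem_Ioi.mp hx)
      rw [(hasDerivAt_g' hx0.ne').deriv]
      apply div_pos
      · have := u_lt' hC hC0 (mem_Ioi.mp hx)
        nlinarith [mul_pos hx0 (sub_pos.mpr this)]
      · exact pow_pos (pow_pos hx0 2) 2
  rcases lt_trichotomy t C with h | h | h
  · exact (hanti (mem_Ioc.mpr ⟨ht, h.le⟩) (mem_Ioc.mpr ⟨hC0, le_refl C⟩) h).le
  · rw [h]
  · exact (hmono (mem_Ici.mpr (le_refl C)) (mem_Ici.mpr h.le) h).le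

open Real Set in
private lemma h_nonneg' {t : ℝ} (ht : 0 ≤ t) : 6 ≤ (t^2 - 4*t + 6) * Real.exp t := by
  have hpos : (0:ℝ) < t^2 - 4*t + 6 := by nlinarith [sq_nonneg (t-2)]
  have h2 := mul_le_mul_of_nonneg_left (exp_cubic_le' ht) hpos.le
  nlinarith [pow_nonneg ht 4, pow_nonneg ht 3, mul_nonneg (mul_nonneg (mul_nonneg ht ht) ht) ht,
    mul_nonneg (mul_nonneg (mul_nonneg (mul_nonneg ht ht) ht) ht) ht, sq_nonneg (t-1),
    mul_nonneg (mul_nonneg (mul_nonneg ht ht) ht) (sq_nonneg (t-1))]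

open Real Set in
private lemma hasDerivAt_F' {a : ℝ} {l : ℝ} (hl : l ≠ 0) :
    HasDerivAt (fun l : ℝ => (Real.exp (a * l) - 1) / l ^ 2)
      ((a * Real.exp (a * l) * l - 2 * (Real.exp (a * l) - 1)) / l ^ 3) l := by
  have hexp : HasDerivAt (fun l : ℝ => Real.exp (a * l)) (Real.exp (a * l) * a) l :=
    by simpa using ((hasDerivAt_id l).const_mul a).exp
  have h := HasDerivAt.fun_div (hexp.sub_const 1) (hasDerivAt_pow 2 l) (pow_ne_zero 2 hl)
  refine h.congr_deriv ?_
  push_cast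
  field_simp

open Real Set in
private lemma hasDerivAt_F1' {a : ℝ} {l : ℝ} (hl : l ≠ 0) :
    HasDerivAt (fun l : ℝ => (a * Real.exp (a * l) * l - 2 * (Real.exp (a * l) - 1)) / l ^ 3)
      ((((a*l)^2 - 4*(a*l) + 6) * Real.exp (a * l) - 6) / l ^ 4) l := by
  have hexp : HasDerivAt (fun l : ℝ => Real.exp (a * l)) (Real.exp (a * l) * a) l :=
    by simpa using ((hasDerivAt_id l).const_mul a).exp
  have hnum : HasDerivAt (fun l : ℝ => a * Real.exp (a * l) * l - 2 * (Real.exp (a * l) - 1))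
      ((a * (Real.exp (a * l) * a)) * l + (a * Real.exp (a * l)) * 1
        - 2 * (Real.exp (a * l) * a)) l :=
    ((hexp.const_mul a).mul (hasDerivAt_id l)).sub ((hexp.sub_const 1).const_mul 2)
  have h := HasDerivAt.fun_div hnum (hasDerivAt_pow 3 l) (pow_ne_zero 3 hl)
  refine h.congr_deriv ?_
  push_cast
  field_simp
  ring

open Real Set in
private lemma F_convex' {a : ℝ} (ha : 0 < a) :
    ConvexOn ℝ (Set.Ioi (0:ℝ)) (fun l : ℝ => (Real.exp (a * l) - 1) / l ^ 2) := by
  apply convexOn_of_hasDerivWithinAt2_nonneg (convex_Ioi 0)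
    (f' := fun l => (a * Real.exp (a * l) * l - 2 * (Real.exp (a * l) - 1)) / l ^ 3)
    (f'' := fun l => (((a*l)^2 - 4*(a*l) + 6) * Real.exp (a * l) - 6) / l ^ 4)
  · exact ContinuousOn.div (by fun_prop) (by fun_prop)
      (fun x hx => pow_ne_zero 2 (mem_Ioi.mp hx).ne')
  · intro x hx
    rw [interior_Ioi] at hx
    exact (hasDerivAt_F' (mem_Ioi.mp hx).ne').hasDerivWithinAt
  · intro x hx
    rw [interior_Ioi] at hx
    exact (hasDerivAt_F1' (mem_Ioi.mp hx).ne').hasDerivWithinAt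
  · intro x hx
    rw [interior_Ioi] at hx
    have hx0 := mem_Ioi.mp hx
    apply div_nonneg _ (pow_nonneg hx0.le 4)
    have := h_nonneg' (t := a * x) (by positivity)
    linarith

/-- For fixed `p ∈ (0,1)`, the function `f(l) = (p^(-l) - 1)/l²` is convex on
    `(0,∞)`, attains its global minimum on `(0,∞)` at `l̄ = -C/ln p`, where
    `C = 2 + W(-2/e²)` (so `(C-2)·e^C = -2`, `0 < C < 2`), with minimum value
    `((e^C - 1)/C²)·(ln p)²`. -/
theorem f_convex_min (p C : ℝ) (hp0 : 0 < p) (hp1 : p < 1)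
    (hC : (C - 2) * Real.exp C = -2) (hC0 : 0 < C) (hC2 : C < 2) :
    ConvexOn ℝ (Set.Ioi (0 : ℝ)) (fun l : ℝ => (p ^ (-l) - 1) / l ^ 2) ∧
      (∀ l ∈ Set.Ioi (0 : ℝ),
        (p ^ (-(-C / Real.log p)) - 1) / (-C / Real.log p) ^ 2 ≤
          (p ^ (-l) - 1) / l ^ 2) ∧
      (p ^ (-(-C / Real.log p)) - 1) / (-C / Real.log p) ^ 2 =
        ((Real.exp C - 1) / C ^ 2) * (Real.log p) ^ 2 := by
  have hlogneg : Real.log p < 0 := Real.log_neg hp0 hp1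
  have hlp : Real.log p ≠ 0 := hlogneg.ne
  set a : ℝ := -Real.log p with hadef
  have ha : 0 < a := by simp [hadef]; linarith
  have hrw : ∀ l : ℝ, p ^ (-l) = Real.exp (a * l) := by
    intro l
    rw [Real.rpow_def_of_pos hp0]
    congr 1
    simp [hadef]
  -- value at the minimizer
  have hbar : p ^ (-(-C / Real.log p)) = Real.exp C := by
    rw [hrw]
    congr 1
    field_simp [hadef]
    linarith
  have hLHS : (p ^ (-(-C / Real.log p)) - 1) / (-C / Real.log p) ^ 2 =
      a ^ 2 * ((Real.exp C - 1) / C ^ 2) := by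
    rw [hbar]
    field_simp [hadef]
    ring
  refine ⟨?_, ?_, ?_⟩
  · have := F_convex' ha
    convert this using 2 with l
    rw [hrw]
  · intro l hl
    have hl0 : 0 < l := Set.mem_Ioi.mp hl
    have key := gmin' hC hC0 (mul_pos ha hl0)
    have hRHS : (p ^ (-l) - 1) / l ^ 2 =
        a ^ 2 * ((Real.exp (a * l) - 1) / (a * l) ^ 2) := by
      rw [hrw]
      field_simp
    rw [hLHS, hRHS]
    exact mul_le_mul_of_nonneg_left key (sq_nonneg a)
  · rw [hLHS]
    have : a ^ 2 = (Real.log p) ^ 2 := by simp [hadef]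
    rw [this]; ring
end

section
/- For fixed p ∈ (0,1) and l > 0, the quantity g = 6 − 6·p^l + 4·l·ln(p) + l²·(ln p)² is strictly positive. -/
/-- For `p ∈ (0,1)` and `l > 0`,
    `6 - 6 p^l + 4 l ln p + l² (ln p)² > 0`. -/
theorem g_pos (p l : ℝ) (hp0 : 0 < p) (hp1 : p < 1) (hl : 0 < l) :
    0 < 6 - 6 * p ^ l + 4 * l * Real.log p + l ^ 2 * (Real.log p) ^ 2 := by
  have hlog : Real.log p < 0 := Real.log_neg hp0 hp1
  set x := l * Real.log p with hxdef
  have hx : x < 0 := mul_neg_of_pos_of_neg hl hlog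
  have hpl : p ^ l = Real.exp x := by
    rw [Real.rpow_def_of_pos hp0, mul_comm]
  have hE : (0:ℝ) < Real.exp x := Real.exp_pos x
  -- exp(-x/2) > 1 - x/2
  have h1 : 1 - x / 2 < Real.exp (-x / 2) := by
    have := Real.add_one_lt_exp (x := -x / 2) (ne_of_gt (by linarith))
    linarith
  have h2 : (1 - x / 2) ^ 2 < Real.exp (-x) := by
    have hpos : (0:ℝ) < 1 - x / 2 := by linarith
    calc (1 - x / 2) ^ 2 < Real.exp (-x / 2) ^ 2 := by
          apply pow_lt_pow_left₀ h1 hpos.le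
          norm_num
      _ = Real.exp (-x) := by
          rw [← Real.exp_nat_mul]
          congr 1; push_cast; ring
  have h3 : Real.exp x * Real.exp (-x) = 1 := by
    rw [← Real.exp_add]; simp
  have h4 : Real.exp x * (1 - x / 2) ^ 2 < 1 := by
    calc Real.exp x * (1 - x / 2) ^ 2 < Real.exp x * Real.exp (-x) :=
      (mul_lt_mul_iff_right₀ hE).2 h2
      _ = 1 := h3
  rw [hpl]
  have hgoal : 0 < 6 - 6 * Real.exp x + 4 * x + x ^ 2 := by
    nlinarith [h4, hE, sq_nonneg (x + 2), sq_nonneg (x*x - 2), mul_pos hE hE,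
      mul_nonneg (neg_nonneg.2 hx.le) (sq_nonneg (x*x - 2)), sq_nonneg x]
  calc (0:ℝ) < 6 - 6 * Real.exp x + 4 * x + x ^ 2 := hgoal
    _ = 6 - 6 * Real.exp x + 4 * l * Real.log p + l ^ 2 * Real.log p ^ 2 := by
        rw [hxdef]; ring
end

section
/- Let ε ∈ (0,1/6) and n ≥ 1 with 36ε² ≤ n. If p ∈ ((1 − √(1 − 36ε²/n))/2, (1 + √(1 − 36ε²/n))/2) and p̂ ∈ (0,1) satisfies |p − p̂| ≤ ε·√(p(1−p)/n), then (1/2)·ln(p) ≥ ln(p̂) ≥ (3/2)·ln(p), i.e., 1/2 ≤ ln(p̂)/ln(p) ≤ 3/2. -/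
set_option maxHeartbeats 1000000


private lemma aux_low (s ph : ℝ) (hs0 : 0 < s) (hs1 : s < 1)
    (h : s^2 - s^2*(1-s^2)/3 < ph) : s^3 ≤ ph := by
  nlinarith [mul_nonneg (mul_nonneg (sq_nonneg s) (by linarith : (0:ℝ) ≤ 1 - s))
    (by linarith : (0:ℝ) ≤ 2 - s)]

private lemma aux_up (s ph : ℝ) (hs0 : 0 < s) (hs1 : s < 1)
    (h : ph < s^2 + s^2*(1-s^2)/3) : ph ≤ s := by
  nlinarith [mul_pos (mul_pos hs0 (by linarith : (0:ℝ) < 1 - s))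
    (by nlinarith : (0:ℝ) < 3 - s - s^2)]

/-- Let `ε ∈ (0,1/6)`, `n ≥ 1` with `36ε² ≤ n`. If
    `p ∈ ((1-√(1-36ε²/n))/2, (1+√(1-36ε²/n))/2)` and `ph ∈ (0,1)` with
    `|p - ph| ≤ ε√(p(1-p)/n)`, then `1/2 ≤ ln(ph)/ln(p) ≤ 3/2`. -/
theorem log_ratio_bounds (ε : ℝ) (n : ℕ) (hn : 1 ≤ n) (hε0 : 0 < ε) (hε : ε < 1/6)
    (h36 : 36 * ε ^ 2 ≤ n) (p ph : ℝ)
    (hpl : (1 - Real.sqrt (1 - 36 * ε ^ 2 / n)) / 2 < p)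
    (hpu : p < (1 + Real.sqrt (1 - 36 * ε ^ 2 / n)) / 2)
    (hph0 : 0 < ph) (hph1 : ph < 1)
    (hclose : |p - ph| ≤ ε * Real.sqrt (p * (1 - p) / n)) :
    1/2 ≤ Real.log ph / Real.log p ∧ Real.log ph / Real.log p ≤ 3/2 := by
  have hn1 : (1:ℝ) ≤ n := by exact_mod_cast hn
  have hnpos : (0:ℝ) < n := by linarith
  have hfrac : 36 * ε ^ 2 / n ≤ 1 := by
    rw [div_le_one hnpos]; exact h36
  have hfrac0 : 0 ≤ 1 - 36 * ε ^ 2 / n := by linarith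
  have hsle1 : Real.sqrt (1 - 36 * ε ^ 2 / n) ≤ 1 := by
    have h0 : (0:ℝ) ≤ 36 * ε ^ 2 / n := by positivity
    simpa using Real.sqrt_le_sqrt (by linarith : 1 - 36 * ε ^ 2 / (n:ℝ) ≤ 1)
  have hp0 : 0 < p := by linarith
  have hp1 : p < 1 := by linarith
  have hsqrt2 : Real.sqrt (1 - 36*ε^2/n) ^ 2 = 1 - 36*ε^2/n := Real.sq_sqrt hfrac0
  have hsq : (2*p - 1)^2 < 1 - 36 * ε ^ 2 / n := by
    nlinarith [Real.sqrt_nonneg (1 - 36*ε^2/n)]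
  have hA : 36 * ε ^ 2 / n * n = 36 * ε ^ 2 := div_mul_cancel₀ _ (ne_of_gt hnpos)
  have hkey : 36 * ε ^ 2 < 4 * (p * (1 - p)) * n := by nlinarith
  have hBpos : 0 < p * (1-p) / n := div_pos (by nlinarith) hnpos
  have hx0 : (0:ℝ) ≤ p * (1-p) / n := hBpos.le
  have hB : p * (1-p) / n * n = p * (1-p) := div_mul_cancel₀ _ (ne_of_gt hnpos)
  have hδ : ε * Real.sqrt (p * (1-p) / n) < p * (1-p) / 3 := by
    have hc : (0:ℝ) ≤ p * (1-p) / 3 := by nlinarith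
    refine lt_of_pow_lt_pow_left₀ 2 hc ?_
    rw [mul_pow, Real.sq_sqrt hx0]
    nlinarith [mul_pos hBpos hBpos, sq_nonneg (ε * n)]
  obtain ⟨h1, h2⟩ := abs_le.mp hclose
  obtain ⟨s, hsdef⟩ : ∃ s, s = Real.sqrt p := ⟨_, rfl⟩
  have hs2 : s^2 = p := by rw [hsdef]; exact Real.sq_sqrt hp0.le
  have hs0 : 0 < s := by rw [hsdef]; exact Real.sqrt_pos.mpr hp0
  have hs1 : s < 1 := by
    refine lt_of_pow_lt_pow_left₀ 2 zero_le_one ?_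
    rw [one_pow, hs2]; exact hp1
  have hppm : p * (1-p) = s^2 * (1 - s^2) := by rw [hs2]
  have hlow : s^3 ≤ ph := by
    refine aux_low s ph hs0 hs1 ?_
    rw [← hppm, hs2]; linarith
  have hup : ph ≤ s := by
    refine aux_up s ph hs0 hs1 ?_
    rw [← hppm, hs2]; linarith
  have hlogp : Real.log p < 0 := Real.log_neg hp0 hp1
  have hlogs : Real.log s = Real.log p / 2 := by rw [hsdef]; exact Real.log_sqrt hp0.le
  have hub' : Real.log ph ≤ Real.log p / 2 := by
    rw [← hlogs]; exact (Real.log_le_log_iff hph0 hs0).mpr hup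
  have hlb' : 3 * Real.log s ≤ Real.log ph := by
    have := (Real.log_le_log_iff (pow_pos hs0 3) hph0).mpr hlow
    rwa [Real.log_pow] at this
    
  constructor
  · rw [le_div_iff_of_neg hlogp]; linarith
  · rw [div_le_iff_of_neg hlogp]; linarith
end

section
/- Let i ∈ {0,1,…,s−1}, let c ≥ 2 be a constant, ε ≤ 1/(6c), n ≥ e^{2c}, and let ℓᵢ = (c·ln n)^{s−i}/c where s satisfies (c·ln n)^s = n. If αᵢ, βᵢ ∈ {1,2,…,⌊√(ln n)⌋} with αᵢ < βᵢ, then (1 − αᵢ/(c·ℓᵢ))^{ℓᵢ} − (1 − βᵢ/(c·ℓᵢ))^{ℓᵢ} > 4ε/√(n/s). -/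
set_option maxHeartbeats 1000000


/-- Lemma on separated parameters: let `c ≥ 2`, `0 < ε ≤ 1/(6c)`, `n ≥ e^{2c}`,
    let `s` satisfy `(c ln n)^s = n`, let `i ∈ {0,…,s-1}` and
    `ℓᵢ = (c ln n)^{s-i}/c`. If `αᵢ, βᵢ ∈ {1,…,⌊√(ln n)⌋}` with `αᵢ < βᵢ`, then
    `(1 - αᵢ/(c ℓᵢ))^{ℓᵢ} - (1 - βᵢ/(c ℓᵢ))^{ℓᵢ} > 4ε/√(n/s)`. -/
theorem large_diff (c ε n s : ℝ) (i : ℕ) (α β : ℕ)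
    (hc : 2 ≤ c) (hε0 : 0 < ε) (hε : ε ≤ 1 / (6 * c))
    (hn : Real.exp (2 * c) ≤ n)
    (hs : (c * Real.log n) ^ s = n) (hi : (i : ℝ) ≤ s - 1)
    (hα1 : 1 ≤ α) (hαβ : α < β) (hβ : β ≤ ⌊Real.sqrt (Real.log n)⌋₊)
    (ℓ : ℝ) (hℓ : ℓ = (c * Real.log n) ^ (s - (i : ℝ)) / c) :
    (1 - (α : ℝ) / (c * ℓ)) ^ ℓ - (1 - (β : ℝ) / (c * ℓ)) ^ ℓ >
      4 * ε / Real.sqrt (n / s) := by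
  have hc0 : (0 : ℝ) < c := by linarith
  have hn0 : (0 : ℝ) < n := lt_of_lt_of_le (Real.exp_pos _) hn
  set L := Real.log n with hLdef
  have hL2c : 2 * c ≤ L := by
    have := Real.log_le_log (Real.exp_pos (2 * c)) hn
    rwa [Real.log_exp] at this
  have hL4 : (4 : ℝ) ≤ L := by linarith
  have hcL8 : (8 : ℝ) ≤ c * L := by nlinarith
  have hcL0 : (0 : ℝ) < c * L := by linarith
  have hsi : (0 : ℝ) ≤ (i : ℝ) := Nat.cast_nonneg i
  have hs1 : (1 : ℝ) ≤ s := by linarith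
  -- s * log (c*L) = L
  have hlog : s * Real.log (c * L) = L := by
    have h := congrArg Real.log hs
    rwa [Real.log_rpow hcL0] at h
  have hexp2 : Real.exp 2 ≤ 8 := by
    have h1 : Real.exp 2 = Real.exp 1 * Real.exp 1 := by
      rw [← Real.exp_add]; norm_num
    nlinarith [Real.exp_one_lt_d9, Real.exp_pos 1]
  have hlcL : (2 : ℝ) ≤ Real.log (c * L) := by
    rw [show (2:ℝ) = Real.log (Real.exp 2) by rw [Real.log_exp]]
    exact Real.log_le_log (Real.exp_pos _) (le_trans hexp2 hcL8)
  have hsL : 2 * s ≤ L := by nlinarith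
  -- ℓ ≥ L
  have hℓL : L ≤ ℓ := by
    rw [hℓ, le_div_iff₀ hc0]
    calc L * c = (c * L) ^ (1 : ℝ) * 1 := by rw [Real.rpow_one]; ring
      _ ≤ (c * L) ^ (s - (i : ℝ)) * 1 :=
          mul_le_mul_of_nonneg_right
            (Real.rpow_le_rpow_of_exponent_le (by linarith) (by linarith)) zero_le_one
      _ = (c * L) ^ (s - (i : ℝ)) := mul_one _
  have hℓ0 : (0 : ℝ) < ℓ := by linarith
  have hcℓ0 : (0 : ℝ) < c * ℓ := by positivity
  have hcℓ : 2 * L ≤ c * ℓ := by nlinarith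
  -- t = sqrt L
  set t := Real.sqrt L with htdef
  have ht0 : (0 : ℝ) ≤ t := Real.sqrt_nonneg L
  have htsq : t ^ 2 = L := Real.sq_sqrt (by linarith)
  have ht2 : (2 : ℝ) ≤ t := by
    nlinarith [Real.sqrt_nonneg L, htsq]
  have hβt : (β : ℝ) ≤ t := by
    calc (β : ℝ) ≤ (⌊t⌋₊ : ℝ) := by exact_mod_cast hβ
      _ ≤ t := Nat.floor_le ht0
  have hα0 : (1 : ℝ) ≤ (α : ℝ) := by exact_mod_cast hα1
  have hβα : (α : ℝ) + 1 ≤ (β : ℝ) := by exact_mod_cast hαβ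
  -- x := β/(cℓ) ≤ 1/4
  have hx0 : (0 : ℝ) ≤ (β : ℝ) / (c * ℓ) := by positivity
  have hx4 : (β : ℝ) / (c * ℓ) ≤ 1 / 4 := by
    rw [div_le_div_iff₀ hcℓ0 (by norm_num : (0:ℝ) < 4)]
    nlinarith
  set B := 1 - (β : ℝ) / (c * ℓ) with hBdef
  set A := 1 - (α : ℝ) / (c * ℓ) with hAdef
  clear_value B A
  have hB34 : (3 : ℝ) / 4 ≤ B := by rw [hBdef]; linarith
  have hB0 : (0 : ℝ) < B := lt_of_lt_of_le (by norm_num) hB34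
  have hB1 : B ≤ 1 := by rw [hBdef]; linarith
  have hA1 : A ≤ 1 := by
    rw [hAdef]; have : (0:ℝ) ≤ (α : ℝ) / (c * ℓ) := by positivity
    linarith
  have hAB : 1 / (c * ℓ) ≤ A - B := by
    rw [hAdef, hBdef]
    rw [show 1 - (α : ℝ) / (c * ℓ) - (1 - (β : ℝ) / (c * ℓ))
        = ((β : ℝ) - α) / (c * ℓ) by ring]
    gcongr
    linarith
  -- lower bound on B ^ ℓ
  have hexpB : Real.exp (-(4 / 3) * ((β : ℝ) / (c * ℓ))) ≤ B := by
    set x := (β : ℝ) / (c * ℓ)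
    have h1 : (4 / 3 * x) + 1 ≤ Real.exp (4 / 3 * x) := Real.add_one_le_exp _
    have h2 : Real.exp (-(4 / 3) * x) * Real.exp (4 / 3 * x) = 1 := by
      rw [← Real.exp_add]; norm_num
    nlinarith [Real.exp_pos (-(4 / 3) * x), Real.exp_pos (4 / 3 * x)]
  have hlogB : -(4 / 3) * ((β : ℝ) / (c * ℓ)) ≤ Real.log B := by
    rw [show -(4 / 3) * ((β : ℝ) / (c * ℓ))
        = Real.log (Real.exp (-(4 / 3) * ((β : ℝ) / (c * ℓ)))) by rw [Real.log_exp]]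
    exact Real.log_le_log (Real.exp_pos _) hexpB
  have hBℓ : Real.exp (-(2 / 3) * t) ≤ B ^ ℓ := by
    rw [Real.rpow_def_of_pos hB0]
    apply Real.exp_le_exp.2
    have h3 : -(4 / 3) * ((β : ℝ) / (c * ℓ)) * ℓ ≤ Real.log B * ℓ :=
      mul_le_mul_of_nonneg_right hlogB hℓ0.le
    have h4 : -(4 / 3) * ((β : ℝ) / (c * ℓ)) * ℓ = -(4 / 3) * ((β : ℝ) / c) := by
      field_simp
    rw [h4] at h3
    have h5 : (β : ℝ) / c ≤ t / 2 := by
      rw [div_le_div_iff₀ hc0 (by norm_num : (0:ℝ) < 2)]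
      nlinarith
    linarith
  -- Bernoulli: A ^ ℓ - B ^ ℓ ≥ B ^ ℓ / c
  have hBℓ0 : (0 : ℝ) < B ^ ℓ := Real.rpow_pos_of_pos hB0 ℓ
  have hmain : B ^ ℓ / c ≤ A ^ ℓ - B ^ ℓ := by
    have hAB0 : (0 : ℝ) ≤ A - B := le_trans (by positivity) hAB
    have hbern : 1 + ℓ * ((A - B) / B) ≤ (1 + (A - B) / B) ^ ℓ :=
      one_add_mul_self_le_rpow_one_add
        (by have := div_nonneg hAB0 hB0.le; linarith) (by linarith)
    have hquot : 1 + (A - B) / B = A / B := by field_simp; ring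
    rw [hquot] at hbern
    have hA0 : (0 : ℝ) < A := by
      have h10 : (0 : ℝ) < 1 / (c * ℓ) := by positivity
      linarith
    have hAeq : A ^ ℓ = (A / B) ^ ℓ * B ^ ℓ := by
      rw [← Real.mul_rpow (div_nonneg hA0.le hB0.le) hB0.le, div_mul_cancel₀ _ hB0.ne']
    have h6 : (1 + ℓ * ((A - B) / B)) * B ^ ℓ ≤ (A / B) ^ ℓ * B ^ ℓ :=
      mul_le_mul_of_nonneg_right hbern hBℓ0.le
    rw [← hAeq] at h6
    have h7 : A - B ≤ (A - B) / B := by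
      rw [le_div_iff₀ hB0]
      calc (A - B) * B ≤ (A - B) * 1 := mul_le_mul_of_nonneg_left hB1 hAB0
        _ = A - B := mul_one _
    have h8 : 1 / c ≤ ℓ * ((A - B) / B) := by
      have h9 : 1 / c = ℓ * (1 / (c * ℓ)) := by field_simp
      rw [h9]
      exact mul_le_mul_of_nonneg_left (le_trans hAB h7) hℓ0.le
    have h6' : B ^ ℓ + ℓ * ((A - B) / B) * B ^ ℓ ≤ A ^ ℓ := by
      rw [show (1 + ℓ * ((A - B) / B)) * B ^ ℓ
          = B ^ ℓ + ℓ * ((A - B) / B) * B ^ ℓ by ring] at h6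
      exact h6
    have h10 : 1 / c * B ^ ℓ ≤ ℓ * ((A - B) / B) * B ^ ℓ :=
      mul_le_mul_of_nonneg_right h8 hBℓ0.le
    have h11 : B ^ ℓ / c = 1 / c * B ^ ℓ := by ring
    linarith only [h6', h10, h11]
  -- the final numeric estimate
  have hexpL : Real.exp L = n := by rw [hLdef]; exact Real.exp_log hn0
  have ht0' : (0 : ℝ) < t := by linarith
  have hS0 : (0 : ℝ) < Real.sqrt 2 * Real.exp (L / 2) / t := by positivity
  have hkey : Real.sqrt 2 * Real.exp (L / 2) / t ≤ Real.sqrt (n / s) := by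
    have hsq : (Real.sqrt 2 * Real.exp (L / 2) / t) ^ 2 = 2 * n / L := by
      rw [div_pow, mul_pow, Real.sq_sqrt (by norm_num : (0:ℝ) ≤ 2), htsq,
        show Real.exp (L / 2) ^ 2 = Real.exp L by
          rw [sq, ← Real.exp_add]; congr 1; ring, hexpL]
    calc Real.sqrt 2 * Real.exp (L / 2) / t
        = Real.sqrt ((Real.sqrt 2 * Real.exp (L / 2) / t) ^ 2) :=
          (Real.sqrt_sq hS0.le).symm
      _ = Real.sqrt (2 * n / L) := by rw [hsq]
      _ ≤ Real.sqrt (n / s) := by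
          apply Real.sqrt_le_sqrt
          rw [div_le_div_iff₀ (by linarith) (by linarith)]
          have h12 := mul_nonneg hn0.le (show (0:ℝ) ≤ L - 2 * s by linarith)
          linarith only [h12]
  have hsqrt2 : (1.4 : ℝ) ≤ Real.sqrt 2 :=
    Real.le_sqrt_of_sq_le (by norm_num)
  have hnum : 2 / 3 < Real.exp (-(2 / 3) * t) * (Real.sqrt 2 * Real.exp (L / 2) / t) := by
    have heq : Real.exp (-(2 / 3) * t) * (Real.sqrt 2 * Real.exp (L / 2) / t)
        = Real.sqrt 2 * Real.exp (L / 2 - 2 / 3 * t) / t := by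
      rw [show L / 2 - 2 / 3 * t = -(2 / 3) * t + L / 2 by ring, Real.exp_add]; ring
    rw [heq, lt_div_iff₀ ht0']
    have hge : 1 + t ^ 2 / 6 ≤ Real.exp (L / 2 - 2 / 3 * t) := by
      have h5 : t ^ 2 / 6 ≤ L / 2 - 2 / 3 * t := by
        have h16 := mul_nonneg (show (0:ℝ) ≤ t by linarith)
          (show (0:ℝ) ≤ t - 2 by linarith)
        linarith only [h16, htsq]
      calc 1 + t ^ 2 / 6 ≤ Real.exp (t ^ 2 / 6) := by
            linarith [Real.add_one_le_exp (t ^ 2 / 6)]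
        _ ≤ _ := Real.exp_le_exp.2 h5
    have hp1 : 1.4 * (1 + t ^ 2 / 6) ≤ Real.sqrt 2 * Real.exp (L / 2 - 2 / 3 * t) :=
      mul_le_mul hsqrt2 hge (by positivity) (Real.sqrt_nonneg 2)
    linarith only [hp1, sq_nonneg (t - 10 / 7)]
  have hsqn0 : (0 : ℝ) < Real.sqrt (n / s) := lt_of_lt_of_le hS0 hkey
  have hfinal : 4 * ε / Real.sqrt (n / s) < Real.exp (-(2 / 3) * t) / c := by
    rw [div_lt_div_iff₀ hsqn0 hc0]
    have h1 : 4 * ε * c ≤ 2 / 3 := by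
      have h2 := mul_le_mul_of_nonneg_right hε (show (0:ℝ) ≤ 6 * c by linarith)
      have h2' : 1 / (6 * c) * (6 * c) = 1 := by field_simp
      linarith only [h2, h2']
    have h3 : Real.exp (-(2 / 3) * t) * (Real.sqrt 2 * Real.exp (L / 2) / t)
        ≤ Real.exp (-(2 / 3) * t) * Real.sqrt (n / s) :=
      mul_le_mul_of_nonneg_left hkey (Real.exp_pos _).le
    linarith only [h1, hnum, h3]
  have hEc : Real.exp (-(2 / 3) * t) / c ≤ B ^ ℓ / c := by gcongr
  linarith only [hmain, hEc, hfinal]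
end
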